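/- arXiv:2108.01992 — 5 statements merged into one kernel-verified Lean document; each statement's English description precedes it below -/
import Mathlib

section
/- Let n and k be integers with 1 ≤ k and n ≥ 2k, and let A be the adjacency matrix (over ℝ) of the Johnson graph J(n,k). Then the set of eigenvalues of A is exactly {(k−ℓ)(n−k−ℓ)−ℓ : 0 ≤ ℓ ≤ k}, and the map ℓ ↦ (k−ℓ)(n−k−ℓ)−ℓ is strictly decreasing on {0,1,…,k}; in particular A has exactly k+1 distinct eigenvalues. -/
open scoped BigOperators

abbrev JVertex (n k : ℕ) := {s : Finset (Fin n) // s.card = k}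

def johnsonGraph (n k : ℕ) : SimpleGraph (JVertex n k) where
  Adj v v' := v ≠ v' ∧ (v.1 ∩ v'.1).card = k - 1
  symm := ⟨fun v v' h => ⟨h.1.symm, by rw [Finset.inter_comm]; exact h.2⟩⟩
  loopless := ⟨fun v h => h.1 rfl⟩

instance (n k : ℕ) : DecidableRel (johnsonGraph n k).Adj :=
  fun v v' => inferInstanceAs (Decidable (v ≠ v' ∧ (v.1 ∩ v'.1).card = k - 1))

open Polynomial Finset

noncomputable def Um (n j : ℕ) : Matrix (JVertex n (j+1)) (JVertex n j) ℝ :=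
  fun v w => if w.1 ⊆ v.1 then 1 else 0

noncomputable def Dm (n j : ℕ) : Matrix (JVertex n j) (JVertex n (j+1)) ℝ :=
  fun v w => if v.1 ⊆ w.1 then 1 else 0

noncomputable def Tm (n : ℕ) : (j : ℕ) → Matrix (JVertex n j) (JVertex n j) ℝ
  | 0 => 0
  | (j+1) => Um n j * Dm n j

lemma card_supersets {n : ℕ} (s : Finset (Fin n)) (t : ℕ) (hst : s.card ≤ t) :
    ((Finset.univ.powersetCard t).filter (fun x => s ⊆ x)).card
      = (n - s.card).choose (t - s.card) := by
  have hc : sᶜ.card = n - s.card := by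
    rw [Finset.card_compl, Fintype.card_fin]
  have h0 := Finset.card_powersetCard (t - s.card) sᶜ
  rw [hc] at h0
  rw [← h0]
  apply Finset.card_bij' (fun x _ => x \ s) (fun y _ => y ∪ s)
  · intro x hx
    simp only [Finset.mem_filter, Finset.mem_powersetCard_univ] at hx
    simp only [Finset.mem_powersetCard]
    refine ⟨fun a ha => ?_, by rw [Finset.card_sdiff_of_subset hx.2, hx.1]⟩
    · simp only [Finset.mem_sdiff] at ha
      simp [ha.2]
  · intro y hy
    simp only [Finset.mem_powersetCard] at hy
    have hd : Disjoint y s := Finset.disjoint_left.2 fun a ha => by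
      have := hy.1 ha; simp at this; exact this
    simp only [Finset.mem_filter, Finset.mem_powersetCard_univ]
    refine ⟨?_, Finset.subset_union_right⟩
    rw [Finset.card_union_of_disjoint hd, hy.2]
    omega
  · intro x hx
    simp only [Finset.mem_filter] at hx
    exact Finset.sdiff_union_of_subset hx.2
  · intro y hy
    simp only [Finset.mem_powersetCard] at hy
    have hd : Disjoint y s := Finset.disjoint_left.2 fun a ha => by
      have := hy.1 ha; simp at this; exact this
    exact Finset.union_sdiff_cancel_right hd

lemma card_supersets_zero {n : ℕ} (s : Finset (Fin n)) (t : ℕ) (hst : t < s.card) :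
    ((Finset.univ.powersetCard t).filter (fun x => s ⊆ x)).card = 0 := by
  rw [Finset.card_eq_zero, Finset.filter_eq_empty_iff]
  intro x hx hs
  rw [Finset.mem_powersetCard_univ] at hx
  have := Finset.card_le_card hs
  omega

lemma jv_sum_boole {n t : ℕ} (P : Finset (Fin n) → Prop) [DecidablePred P] :
    (∑ x : JVertex n t, if P x.1 then (1:ℝ) else 0)
      = ((Finset.univ.powersetCard t).filter P).card := by
  rw [← Finset.sum_boole]
  rw [← Finset.sum_subtype (Finset.univ.powersetCard t)
    (fun x => Finset.mem_powersetCard_univ) (fun s => if P s then (1:ℝ) else 0)]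

lemma Tm_apply {n : ℕ} (j : ℕ) (v w : JVertex n (j+1)) :
    Tm n (j+1) v w = ((v.1 ∩ w.1).card.choose j : ℝ) := by
  show (Um n j * Dm n j) v w = _
  rw [Matrix.mul_apply]
  have : ∀ y : JVertex n j, Um n j v y * Dm n j y w
      = if y.1 ⊆ v.1 ∩ w.1 then (1:ℝ) else 0 := by
    intro y
    simp only [Um, Dm, Finset.subset_inter_iff]
    by_cases h1 : y.1 ⊆ v.1 <;> by_cases h2 : y.1 ⊆ w.1 <;> simp [h1, h2]
  rw [Finset.sum_congr rfl fun y _ => this y,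
    jv_sum_boole (n:=n) (t:=j) (fun y => y ⊆ v.1 ∩ w.1)]
  congr 1
  have : (Finset.univ.powersetCard j).filter (fun y => y ⊆ v.1 ∩ w.1)
      = (v.1 ∩ w.1).powersetCard j := by
    ext y
    simp [Finset.mem_powersetCard, Finset.mem_powersetCard_univ, and_comm]
  rw [this, Finset.card_powersetCard]

lemma DU_apply {n : ℕ} (j : ℕ) (v w : JVertex n j) :
    (Dm n j * Um n j) v w
      = (((Finset.univ.powersetCard (j+1)).filter (fun x => v.1 ∪ w.1 ⊆ x)).card : ℝ) := by
  rw [Matrix.mul_apply]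
  have : ∀ x : JVertex n (j+1), Dm n j v x * Um n j x w
      = if v.1 ∪ w.1 ⊆ x.1 then (1:ℝ) else 0 := by
    intro x
    simp only [Dm, Um, Finset.union_subset_iff]
    by_cases h1 : v.1 ⊆ x.1 <;> by_cases h2 : w.1 ⊆ x.1 <;> simp [h1, h2]
  rw [Finset.sum_congr rfl fun x _ => this x,
    jv_sum_boole (n:=n) (t:=j+1) (fun x => v.1 ∪ w.1 ⊆ x)]

lemma DU_comm (n j : ℕ) :
    Dm n j * Um n j = Tm n j + ((n:ℝ) - 2*j) • (1 : Matrix (JVertex n j) (JVertex n j) ℝ) := by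
  cases j with
  | zero =>
    ext v w
    rw [DU_apply, Matrix.add_apply, Matrix.smul_apply]
    have hv : v = w := by
      apply Subtype.ext
      rw [Finset.card_eq_zero.1 v.2, Finset.card_eq_zero.1 w.2]
    subst hv
    rw [Finset.union_self]
    have h1 : v.1.card ≤ 0 + 1 := by rw [v.2]; omega
    rw [card_supersets v.1 (0+1) h1, v.2]
    simp [Tm, Matrix.one_apply]
  | succ m =>
    ext v w
    have hjn : m + 1 ≤ n := by
      have := Finset.card_le_univ v.1
      simpa [v.2] using this
    rw [DU_apply, Matrix.add_apply, Matrix.smul_apply, Tm_apply]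
    by_cases hvw : v = w
    · subst hvw
      rw [Finset.union_self, Finset.inter_self]
      have h1 : v.1.card ≤ m + 1 + 1 := by rw [v.2]; omega
      rw [card_supersets v.1 (m+1+1) h1, v.2, Matrix.one_apply_eq]
      have h2 : m + 1 + 1 - (m+1) = 1 := by omega
      rw [h2, Nat.choose_one_right, Nat.choose_succ_self_right]
      rw [smul_eq_mul]
      push_cast [Nat.cast_sub hjn]
      ring
    · have hne : v.1 ≠ w.1 := fun h => hvw (Subtype.ext h)
      have hle : (v.1 ∩ w.1).card ≤ m + 1 := by
        have := Finset.card_le_card (Finset.inter_subset_left : v.1 ∩ w.1 ⊆ v.1)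
        rw [v.2] at this; exact this
      have hlt : (v.1 ∩ w.1).card < m + 1 := by
        rcases lt_or_eq_of_le hle with h | h
        · exact h
        · exfalso
          have h2 : v.1 ∩ w.1 = v.1 := Finset.eq_of_subset_of_card_le
            Finset.inter_subset_left (by rw [v.2, h])
          have hvsw : v.1 ⊆ w.1 := by rw [← h2]; exact Finset.inter_subset_right
          exact hne (Finset.eq_of_subset_of_card_le hvsw (by rw [v.2, w.2]))
      have hcup : (v.1 ∪ w.1).card + (v.1 ∩ w.1).card = 2 * (m+1) := by
        rw [Finset.card_union_add_card_inter, v.2, w.2]; omega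
      rw [Matrix.one_apply_ne hvw]
      by_cases hc : (v.1 ∩ w.1).card = m
      · have hcu : (v.1 ∪ w.1).card = m + 1 + 1 := by omega
        rw [card_supersets _ _ (le_of_eq hcu), hcu, hc]
        simp
      · have hcu : m + 1 + 1 < (v.1 ∪ w.1).card := by omega
        rw [card_supersets_zero _ _ hcu, Nat.choose_eq_zero_of_lt (by omega)]
        simp

lemma aeval_semiconj {α β : Type*} [Fintype α] [Fintype β] [DecidableEq α] [DecidableEq β]
    (M : Matrix α α ℝ) (N : Matrix β β ℝ) (U : Matrix α β ℝ) (h : M * U = U * N)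
    (p : ℝ[X]) : (Polynomial.aeval M p) * U = U * (Polynomial.aeval N p) := by
  induction p using Polynomial.induction_on' with
  | add p q hp hq => rw [map_add, map_add, Matrix.add_mul, Matrix.mul_add, hp, hq]
  | monomial i a =>
    have hpow : ∀ i : ℕ, M ^ i * U = U * N ^ i := by
      intro i
      induction i with
      | zero => simp
      | succ i ih =>
        rw [pow_succ, pow_succ, Matrix.mul_assoc, h, ← Matrix.mul_assoc, ih, Matrix.mul_assoc]
    simp only [Polynomial.aeval_monomial, Algebra.algebraMap_eq_smul_one,
      Matrix.smul_mul, Matrix.mul_smul, Matrix.one_mul]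
    rw [hpow]

noncomputable def ej (n j ℓ : ℕ) : ℝ := ((j:ℝ) - ℓ) * ((n:ℝ) - j - ℓ + 1)

noncomputable def Pj (n j : ℕ) : ℝ[X] := ∏ ℓ ∈ Finset.range (j+1), (X - C (ej n j ℓ))

lemma Pj_aeval (n : ℕ) : ∀ j, Polynomial.aeval (Tm n j) (Pj n j) = 0 := by
  intro j
  induction j with
  | zero =>
    simp [Pj, Tm, ej]
  | succ j ih =>
    have hej0 : ej n (j+1) (j+1) = 0 := by simp [ej]
    have hsplit : Pj n (j+1) = (∏ ℓ ∈ Finset.range (j+1), (X - C (ej n (j+1) ℓ))) * X := by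
      rw [Pj, Finset.prod_range_succ, hej0]
      simp
    set Q : ℝ[X] := ∏ ℓ ∈ Finset.range (j+1), (X - C (ej n (j+1) ℓ)) with hQ
    have hsc : Tm n (j+1) * Um n j = Um n j * (Tm n j + ((n:ℝ) - 2*j) • 1) := by
      show Um n j * Dm n j * Um n j = _
      rw [Matrix.mul_assoc, DU_comm]
    have key : (Polynomial.aeval (Tm n (j+1)) Q) * Um n j
        = Um n j * Polynomial.aeval (Tm n j + ((n:ℝ) - 2*j) • 1) Q :=
      aeval_semiconj _ _ _ hsc Q
    have hcomp : Polynomial.aeval (Tm n j + ((n:ℝ) - 2*j) • 1) Q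
        = Polynomial.aeval (Tm n j) (Q.comp (X + C ((n:ℝ) - 2*j))) := by
      rw [Polynomial.aeval_comp, map_add, Polynomial.aeval_X, Polynomial.aeval_C,
        Algebra.algebraMap_eq_smul_one]
    have hQcomp : Q.comp (X + C ((n:ℝ) - 2*j)) = Pj n j := by
      have hfac : ∀ ℓ : ℕ, (X - C (ej n (j+1) ℓ)).comp (X + C ((n:ℝ) - 2*j))
          = X - C (ej n j ℓ) := by
        intro ℓ
        have he : ej n j ℓ = ej n (j+1) ℓ - ((n:ℝ) - 2*j) := by
          simp only [ej]; push_cast; ring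
        rw [he]
        generalize ((n:ℝ) - 2 * (j:ℝ)) = c
        rw [Polynomial.sub_comp, Polynomial.X_comp, Polynomial.C_comp, map_sub]
        ring
      rw [hQ, Pj, Polynomial.prod_comp]
      exact Finset.prod_congr rfl fun ℓ _ => hfac ℓ
    have : Polynomial.aeval (Tm n (j+1)) (Pj n (j+1))
        = (Polynomial.aeval (Tm n (j+1)) Q) * (Um n j * Dm n j) := by
      rw [hsplit, map_mul, Polynomial.aeval_X]
      rfl
    rw [this, ← Matrix.mul_assoc, key, hcomp, hQcomp, ih, Matrix.mul_zero, Matrix.zero_mul]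

noncomputable def μr (n k ℓ : ℕ) : ℝ := ((k:ℝ) - ℓ) * ((n:ℝ) - k - ℓ) - ℓ

noncomputable def pμ (n k : ℕ) : ℝ[X] := ∏ ℓ ∈ Finset.range (k+1), (X - C (μr n k ℓ))

lemma inter_lt_of_ne {n k : ℕ} (v w : JVertex n k) (h : v ≠ w) :
    (v.1 ∩ w.1).card < k := by
  have hle : (v.1 ∩ w.1).card ≤ k := by
    have := Finset.card_le_card (Finset.inter_subset_left : v.1 ∩ w.1 ⊆ v.1)
    rw [v.2] at this; exact this
  rcases lt_or_eq_of_le hle with h' | h'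
  · exact h'
  · exfalso
    have h2 : v.1 ∩ w.1 = v.1 := Finset.eq_of_subset_of_card_le
      Finset.inter_subset_left (by rw [v.2, h'])
    have hvsw : v.1 ⊆ w.1 := by rw [← h2]; exact Finset.inter_subset_right
    exact h (Subtype.ext (Finset.eq_of_subset_of_card_le hvsw (by rw [v.2, w.2])))

lemma adj_eq {n k : ℕ} (hk : 1 ≤ k) :
    SimpleGraph.adjMatrix ℝ (johnsonGraph n k)
      = Tm n k - (k:ℝ) • (1 : Matrix (JVertex n k) (JVertex n k) ℝ) := by
  obtain ⟨m, rfl⟩ : ∃ m, k = m + 1 := ⟨k - 1, by omega⟩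
  ext v w
  rw [Matrix.sub_apply, Matrix.smul_apply, Tm_apply, SimpleGraph.adjMatrix_apply]
  by_cases hvw : v = w
  · subst hvw
    rw [Finset.inter_self, v.2, Matrix.one_apply_eq, Nat.choose_succ_self_right]
    have : ¬ (johnsonGraph n (m+1)).Adj v v := (johnsonGraph n (m+1)).loopless.irrefl v
    rw [if_neg this, smul_eq_mul]
    push_cast; ring
  · have hlt := inter_lt_of_ne v w hvw
    rw [Matrix.one_apply_ne hvw]
    have hadj : (johnsonGraph n (m+1)).Adj v w ↔ (v.1 ∩ w.1).card = m := by
      constructor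
      · intro h; have := h.2; omega
      · intro h; exact ⟨hvw, by omega⟩
    by_cases hc : (v.1 ∩ w.1).card = m
    · rw [if_pos (hadj.2 hc), hc, Nat.choose_self, smul_eq_mul]
      push_cast; ring
    · rw [if_neg (fun h => hc (hadj.1 h)), Nat.choose_eq_zero_of_lt (by omega), smul_eq_mul]
      push_cast; ring

lemma aeval_pμ {n k : ℕ} (hk : 1 ≤ k) :
    Polynomial.aeval (SimpleGraph.adjMatrix ℝ (johnsonGraph n k)) (pμ n k) = 0 := by
  have hA : SimpleGraph.adjMatrix ℝ (johnsonGraph n k)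
      = Polynomial.aeval (Tm n k) (X - C (k:ℝ)) := by
    rw [map_sub, Polynomial.aeval_X, Polynomial.aeval_C, Algebra.algebraMap_eq_smul_one]
    exact adj_eq hk
  rw [hA, ← Polynomial.aeval_comp]
  have hcomp : (pμ n k).comp (X - C (k:ℝ)) = Pj n k := by
    have hfac : ∀ ℓ : ℕ, (X - C (μr n k ℓ)).comp (X - C (k:ℝ)) = X - C (ej n k ℓ) := by
      intro ℓ
      have he : ej n k ℓ = μr n k ℓ + (k:ℝ) := by
        simp only [ej, μr]; push_cast; ring
      rw [he]
      generalize μr n k ℓ = a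
      generalize (k:ℝ) = c
      rw [Polynomial.sub_comp, Polynomial.X_comp, Polynomial.C_comp, map_add]
      ring
    rw [pμ, Pj, Polynomial.prod_comp]
    exact Finset.prod_congr rfl fun ℓ _ => hfac ℓ
  rw [hcomp, Pj_aeval]

section Walks

variable {n k : ℕ}

lemma pow_apply_nonneg (m : ℕ) (v w : JVertex n k) :
    0 ≤ ((SimpleGraph.adjMatrix ℝ (johnsonGraph n k)) ^ m) v w := by
  induction m generalizing v w with
  | zero =>
    rw [pow_zero, Matrix.one_apply]
    split <;> norm_num
  | succ m ih =>
    rw [pow_succ, Matrix.mul_apply]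
    apply Finset.sum_nonneg
    intro u _
    apply mul_nonneg (ih v u)
    rw [SimpleGraph.adjMatrix_apply]
    split <;> norm_num

lemma pow_apply_ne (m : ℕ) (v w : JVertex n k)
    (h : ((SimpleGraph.adjMatrix ℝ (johnsonGraph n k)) ^ m) v w ≠ 0) :
    k ≤ (v.1 ∩ w.1).card + m := by
  induction m generalizing v w with
  | zero =>
    rw [pow_zero, Matrix.one_apply] at h
    have hvw : v = w := by by_contra hne; rw [if_neg hne] at h; exact h rfl
    subst hvw
    rw [Finset.inter_self, v.2]; omega
  | succ m ih =>
    rw [pow_succ, Matrix.mul_apply] at h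
    obtain ⟨u, _, hu⟩ := Finset.exists_ne_zero_of_sum_ne_zero h
    have h1 : ((SimpleGraph.adjMatrix ℝ (johnsonGraph n k)) ^ m) v u ≠ 0 :=
      fun h0 => hu (by rw [h0, zero_mul])
    have h2 : (SimpleGraph.adjMatrix ℝ (johnsonGraph n k)) u w ≠ 0 :=
      fun h0 => hu (by rw [h0, mul_zero])
    have hadj : (johnsonGraph n k).Adj u w := by
      by_contra hne
      rw [SimpleGraph.adjMatrix_apply, if_neg hne] at h2
      exact h2 rfl
    have hiw : (u.1 ∩ w.1).card = k - 1 := hadj.2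
    have hk1 : 1 ≤ k := by
      by_contra hc
      have hk0 : k = 0 := by omega
      apply hadj.1
      apply Subtype.ext
      have hu0 : u.1 = ∅ := Finset.card_eq_zero.1 (by rw [u.2, hk0])
      have hw0 : w.1 = ∅ := Finset.card_eq_zero.1 (by rw [w.2, hk0])
      rw [hu0, hw0]
    have hiv := ih v u h1
    -- |v ∩ u| ≤ |v ∩ w| + |u \ w|
    have hsub : v.1 ∩ u.1 ⊆ (v.1 ∩ w.1) ∪ (u.1 \ w.1) := by
      intro a ha
      rw [Finset.mem_inter] at ha
      rw [Finset.mem_union, Finset.mem_inter, Finset.mem_sdiff]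
      by_cases haw : a ∈ w.1
      · exact Or.inl ⟨ha.1, haw⟩
      · exact Or.inr ⟨ha.2, haw⟩
    have hcard := Finset.card_le_card hsub
    have hcard2 := Finset.card_union_le (v.1 ∩ w.1) (u.1 \ w.1)
    have hsd : (u.1 \ w.1).card + (u.1 ∩ w.1).card = k := by
      rw [Finset.card_sdiff_add_card_inter, u.2]
    omega

lemma pow_apply_pos (d : ℕ) (v w : JVertex n k)
    (h : (v.1 ∩ w.1).card + d = k) :
    0 < ((SimpleGraph.adjMatrix ℝ (johnsonGraph n k)) ^ d) v w := by
  induction d generalizing v w with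
  | zero =>
    have hvw : v = w := by
      have h2 : v.1 ∩ w.1 = v.1 := Finset.eq_of_subset_of_card_le
        Finset.inter_subset_left (by rw [v.2]; omega)
      have hvsw : v.1 ⊆ w.1 := by rw [← h2]; exact Finset.inter_subset_right
      exact Subtype.ext (Finset.eq_of_subset_of_card_le hvsw (by rw [v.2, w.2]))
    subst hvw
    rw [pow_zero, Matrix.one_apply_eq]
    norm_num
  | succ d ih =>
    set c := (v.1 ∩ w.1).card with hc
    have hvd : (v.1 \ w.1).card = d + 1 := by
      have := Finset.card_sdiff_add_card_inter v.1 w.1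
      rw [v.2] at this; omega
    have hwd : (w.1 \ v.1).card = d + 1 := by
      have := Finset.card_sdiff_add_card_inter w.1 v.1
      rw [w.2, Finset.inter_comm] at this; omega
    obtain ⟨x, hx⟩ := Finset.card_pos.1 (by omega : 0 < (v.1 \ w.1).card)
    obtain ⟨y, hy⟩ := Finset.card_pos.1 (by omega : 0 < (w.1 \ v.1).card)
    rw [Finset.mem_sdiff] at hx hy
    have hxw : x ∉ w.1 := hx.2
    have hyv : y ∉ v.1 := hy.2
    have hxv : x ∈ v.1 := hx.1
    have hyw : y ∈ w.1 := hy.1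
    have hk1 : 1 ≤ k := by omega
    have hucard : (insert x (w.1.erase y)).card = k := by
      rw [Finset.card_insert_of_notMem (fun hmem => hxw (Finset.erase_subset _ _ hmem)),
        Finset.card_erase_of_mem hyw, w.2]
      omega
    set u : JVertex n k := ⟨insert x (w.1.erase y), hucard⟩ with hu
    have huw_inter : u.1 ∩ w.1 = w.1.erase y := by
      rw [hu]
      rw [Finset.insert_inter_of_notMem hxw]
      exact Finset.inter_eq_left.2 (Finset.erase_subset _ _)
    have hadj : (johnsonGraph n k).Adj u w := by
      constructor
      · intro heq
        have : x ∈ w.1 := by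
          rw [← heq]; exact Finset.mem_insert_self _ _
        exact hxw this
      · rw [huw_inter, Finset.card_erase_of_mem hyw, w.2]
    have hvu_inter : (v.1 ∩ u.1).card = c + 1 := by
      have h1 : v.1 ∩ u.1 = insert x (v.1 ∩ w.1.erase y) := by
        ext a
        simp only [hu, Finset.mem_inter, Finset.mem_insert]
        constructor
        · rintro ⟨hav, hax | hae⟩
          · exact Or.inl hax
          · exact Or.inr ⟨hav, hae⟩
        · rintro (rfl | ⟨hav, hae⟩)
          · exact ⟨hxv, Or.inl rfl⟩
          · exact ⟨hav, Or.inr hae⟩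
      have h2 : v.1 ∩ w.1.erase y = v.1 ∩ w.1 := by
        ext a
        simp only [Finset.mem_inter, Finset.mem_erase]
        constructor
        · rintro ⟨hav, _, haw⟩; exact ⟨hav, haw⟩
        · rintro ⟨hav, haw⟩
          exact ⟨hav, fun hay => hyv (hay ▸ hav), haw⟩
      rw [h1, h2, Finset.card_insert_of_notMem (fun hmem => hxw (Finset.mem_inter.1 hmem).2)]
    have hpos : 0 < ((SimpleGraph.adjMatrix ℝ (johnsonGraph n k)) ^ d) v u :=
      ih v u (by omega)
    rw [pow_succ, Matrix.mul_apply]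
    apply Finset.sum_pos'
    · intro i _
      apply mul_nonneg (pow_apply_nonneg d v i)
      rw [SimpleGraph.adjMatrix_apply]; split <;> norm_num
    · refine ⟨u, Finset.mem_univ u, ?_⟩
      rw [SimpleGraph.adjMatrix_apply, if_pos hadj, mul_one]
      exact hpos

lemma exists_pair (d : ℕ) (hd : d ≤ k) (hkd : k + d ≤ n) :
    ∃ v w : JVertex n k, (v.1 ∩ w.1).card + d = k := by
  have hkn : k ≤ n := by omega
  obtain ⟨v0, _, hv0⟩ := Finset.exists_subset_card_eq
    (show k ≤ (Finset.univ : Finset (Fin n)).card by simpa using hkn)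
  obtain ⟨S, hSsub, hS⟩ := Finset.exists_subset_card_eq (show d ≤ v0.card by omega)
  obtain ⟨S', hS'sub, hS'⟩ := Finset.exists_subset_card_eq
    (show d ≤ v0ᶜ.card by rw [Finset.card_compl, hv0, Fintype.card_fin]; omega)
  have hdisj : Disjoint (v0 \ S) S' := by
    apply Finset.disjoint_left.2
    intro a ha haS'
    have h1 : a ∈ v0 := (Finset.mem_sdiff.1 ha).1
    have h2 : a ∈ v0ᶜ := hS'sub haS'
    simp only [Finset.mem_compl] at h2
    exact h2 h1
  have hsd : (v0 \ S).card = k - d := by rw [Finset.card_sdiff_of_subset hSsub, hv0, hS]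
  have hwcard : ((v0 \ S) ∪ S').card = k := by
    rw [Finset.card_union_of_disjoint hdisj, hsd, hS']; omega
  refine ⟨⟨v0, hv0⟩, ⟨(v0 \ S) ∪ S', hwcard⟩, ?_⟩
  have hint : v0 ∩ ((v0 \ S) ∪ S') = v0 \ S := by
    rw [Finset.inter_union_distrib_left]
    have h1 : v0 ∩ (v0 \ S) = v0 \ S := Finset.inter_eq_right.2 Finset.sdiff_subset
    have h2 : v0 ∩ S' = ∅ := by
      apply Finset.eq_empty_of_forall_notMem
      intro a ha
      rw [Finset.mem_inter] at ha
      have := hS'sub ha.2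
      simp only [Finset.mem_compl] at this
      exact this ha.1
    rw [h1, h2, Finset.union_empty]
  show ((⟨v0, hv0⟩ : JVertex n k).1 ∩ _).card + d = k
  rw [hint, hsd]; omega

lemma minpoly_deg (hk : 1 ≤ k) (hn : 2 * k ≤ n) :
    k + 1 ≤ (minpoly ℝ (SimpleGraph.adjMatrix ℝ (johnsonGraph n k))).natDegree := by
  set A := SimpleGraph.adjMatrix ℝ (johnsonGraph n k) with hA
  by_contra hlt
  push_neg at hlt
  set q := minpoly ℝ A with hq
  set d := q.natDegree with hd
  have hdk : d ≤ k := by omega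
  have hmon : q.Monic := minpoly.monic (Matrix.isIntegral A)
  obtain ⟨v, w, hvw⟩ := exists_pair d hdk (show k + d ≤ n by omega)
  have h0 : Polynomial.aeval A q = 0 := minpoly.aeval ℝ A
  have hsum : Polynomial.aeval A q = ∑ i ∈ Finset.range (d + 1), q.coeff i • A ^ i :=
    Polynomial.aeval_eq_sum_range A
  have hentry : (∑ i ∈ Finset.range (d + 1), q.coeff i • A ^ i) v w = 0 := by
    rw [← hsum, h0]; rfl
  rw [Finset.sum_range_succ, Matrix.add_apply, Matrix.sum_apply] at hentry
  have hzero : ∀ i ∈ Finset.range d, (q.coeff i • A ^ i) v w = 0 := by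
    intro i hi
    rw [Finset.mem_range] at hi
    rw [Matrix.smul_apply]
    have : (A ^ i) v w = 0 := by
      by_contra hne
      have := pow_apply_ne i v w hne
      omega
    rw [this, smul_zero]
  rw [Finset.sum_eq_zero hzero, zero_add, Matrix.smul_apply, hmon.coeff_natDegree, one_smul]
    at hentry
  have := pow_apply_pos d v w hvw
  rw [hentry] at this
  exact lt_irrefl 0 this

lemma pμ_monic : (pμ n k).Monic :=
  Polynomial.monic_prod_of_monic _ _ fun ℓ _ => Polynomial.monic_X_sub_C _

lemma pμ_natDegree : (pμ n k).natDegree = k + 1 := by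
  rw [pμ, Polynomial.natDegree_prod_of_monic _ _ fun ℓ _ => Polynomial.monic_X_sub_C _]
  simp [Polynomial.natDegree_X_sub_C]

lemma minpoly_eq (hk : 1 ≤ k) (hn : 2 * k ≤ n) :
    minpoly ℝ (SimpleGraph.adjMatrix ℝ (johnsonGraph n k)) = pμ n k := by
  set A := SimpleGraph.adjMatrix ℝ (johnsonGraph n k) with hA
  set q := minpoly ℝ A with hq
  have hdvd : q ∣ pμ n k := minpoly.dvd ℝ A (aeval_pμ hk)
  have hp0 : pμ n k ≠ 0 := (pμ_monic).ne_zero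
  have hdle : q.natDegree ≤ k + 1 := by
    have := Polynomial.natDegree_le_of_dvd hdvd hp0
    rwa [pμ_natDegree] at this
  have hdeq : q.natDegree = k + 1 := le_antisymm hdle (minpoly_deg hk hn)
  obtain ⟨r, hr⟩ := hdvd
  have hq0 : q ≠ 0 := minpoly.ne_zero (Matrix.isIntegral A)
  have hr0 : r ≠ 0 := by
    rintro rfl
    rw [mul_zero] at hr
    exact hp0 hr
  have hdr : r.natDegree = 0 := by
    have := Polynomial.natDegree_mul hq0 hr0
    rw [← hr, pμ_natDegree, hdeq] at this
    omega
  obtain ⟨a, rfl⟩ := Polynomial.natDegree_eq_zero.1 hdr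
  have hlc : (pμ n k).leadingCoeff = 1 := pμ_monic
  rw [hr, Polynomial.leadingCoeff_mul, (minpoly.monic (Matrix.isIntegral A)).leadingCoeff,
    one_mul, Polynomial.leadingCoeff_C] at hlc
  rw [hr, hlc, map_one, mul_one]

/-- the eigenvalues of the adjacency matrix of the Johnson graph `J(n,k)`
(for `1 ≤ k`, `2k ≤ n`) are exactly `(k−ℓ)(n−k−ℓ)−ℓ` for `0 ≤ ℓ ≤ k`; this map is
strictly decreasing in `ℓ`, and there are exactly `k+1` distinct eigenvalues. -/
theorem johnson_eigenvalues (n k : ℕ) (hk : 1 ≤ k) (hn : 2 * k ≤ n) :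
    {μ : ℝ | Module.End.HasEigenvalue
        (Matrix.toLin' (SimpleGraph.adjMatrix ℝ (johnsonGraph n k))) μ}
      = (fun ℓ : ℕ => ((k : ℝ) - ℓ) * ((n : ℝ) - k - ℓ) - ℓ) '' {ℓ : ℕ | ℓ ≤ k}
    ∧ StrictAntiOn (fun ℓ : ℕ => ((k : ℝ) - ℓ) * ((n : ℝ) - k - ℓ) - ℓ) {ℓ : ℕ | ℓ ≤ k}
    ∧ {μ : ℝ | Module.End.HasEigenvalue
        (Matrix.toLin' (SimpleGraph.adjMatrix ℝ (johnsonGraph n k))) μ}.ncard = k + 1 := by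
  have hanti : StrictAntiOn (fun ℓ : ℕ => ((k : ℝ) - ℓ) * ((n : ℝ) - k - ℓ) - ℓ)
      {ℓ : ℕ | ℓ ≤ k} := by
    intro a ha b hb hab
    simp only [Set.mem_setOf_eq] at ha hb
    have h1 : (a:ℝ) < b := by exact_mod_cast hab
    have h2 : (b:ℝ) ≤ k := by exact_mod_cast hb
    have h3 : 2*(k:ℝ) ≤ n := by exact_mod_cast hn
    have h4 : 0 < (b:ℝ) - a := by linarith
    have h5 : (0:ℝ) < ((k:ℝ) - a) + ((n:ℝ) - k - b) + 1 := by linarith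
    have key : ((k:ℝ)-a)*((n:ℝ)-k-a)-a - (((k:ℝ)-b)*((n:ℝ)-k-b)-b)
        = ((b:ℝ)-a)*(((k:ℝ)-a)+((n:ℝ)-k-b)+1) := by ring
    show ((k:ℝ) - b) * ((n:ℝ) - k - b) - b < ((k:ℝ) - a) * ((n:ℝ) - k - a) - a
    linarith [mul_pos h4 h5, key]
  have hset : {μ : ℝ | Module.End.HasEigenvalue
        (Matrix.toLin' (SimpleGraph.adjMatrix ℝ (johnsonGraph n k))) μ}
      = (fun ℓ : ℕ => ((k : ℝ) - ℓ) * ((n : ℝ) - k - ℓ) - ℓ) '' {ℓ : ℕ | ℓ ≤ k} := by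
    ext μ
    rw [Set.mem_setOf_eq, Module.End.hasEigenvalue_iff_isRoot, Matrix.minpoly_toLin',
      minpoly_eq hk hn]
    rw [Polynomial.IsRoot, pμ, Polynomial.eval_prod]
    rw [Finset.prod_eq_zero_iff]
    constructor
    · rintro ⟨ℓ, hℓ, hz⟩
      rw [Finset.mem_range, Nat.lt_succ_iff] at hℓ
      rw [Polynomial.eval_sub, Polynomial.eval_X, Polynomial.eval_C, sub_eq_zero] at hz
      simp only [μr] at hz
      exact ⟨ℓ, hℓ, hz.symm⟩
    · rintro ⟨ℓ, hℓ, hz⟩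
      refine ⟨ℓ, Finset.mem_range.2 (Nat.lt_succ_of_le hℓ), ?_⟩
      rw [Polynomial.eval_sub, Polynomial.eval_X, Polynomial.eval_C, sub_eq_zero]
      simp only [μr]
      exact hz.symm
  refine ⟨hset, hanti, ?_⟩
  rw [hset, Set.ncard_image_of_injOn hanti.injOn]
  have : {ℓ : ℕ | ℓ ≤ k} = ↑(Finset.Iic k) := by
    ext ℓ; simp
  rw [this, Set.ncard_coe_finset, Nat.card_Iic]

end Walks
end

section
/- Let n and k be integers with 1 ≤ k and n ≥ 2k, let A be the adjacency matrix (over ℝ) of the Johnson graph J(n,k), and fix a vertex w. For 0 ≤ ℓ ≤ k, let ν_ℓ = {v : |v ∩ w| = k−ℓ} and let |ν_ℓ⟩ = (1/√|ν_ℓ|) Σ_{v∈ν_ℓ} |v⟩. Then the (k+1)-dimensional subspace spanned by {|ν_ℓ⟩ : 0 ≤ ℓ ≤ k} is invariant under A and under the rank-one operator |w⟩⟨w|; consequently it is invariant under H = −γ A − |w⟩⟨w| for every real γ. -/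
open scoped BigOperators RealInnerProductSpace

/-- The set `ν_ℓ` of vertices `v` of `J(n,k)` with `|v ∩ w| = k − ℓ`. -/
def nuSet (n k : ℕ) (w : JVertex n k) (ℓ : ℕ) : Finset (JVertex n k) :=
  Finset.univ.filter (fun v => (v.1 ∩ w.1).card = k - ℓ)

/-- The normalized uniform superposition `|ν_ℓ⟩` over `ν_ℓ`. -/
noncomputable def nuVec (n k : ℕ) (w : JVertex n k) (ℓ : ℕ) :
    EuclideanSpace ℝ (JVertex n k) :=
  (Real.sqrt (nuSet n k w ℓ).card)⁻¹ •
    ∑ v ∈ nuSet n k w ℓ, EuclideanSpace.single v (1 : ℝ)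

namespace JohnsonAux

open Finset

/-- Gluing permutation lemma. -/
lemma exists_perm_finset {α : Type*} [DecidableEq α] [Fintype α]
    (s t u : Finset α) (hs : s ⊆ u) (ht : t ⊆ u) (hcard : s.card = t.card) :
    ∃ π : Equiv.Perm α, (∀ x ∉ u, π x = x) ∧ s.image π = t ∧ u.image π = u := by
  classical
  have hcard2 : (u \ s).card = (u \ t).card := by
    rw [card_sdiff_of_subset hs, card_sdiff_of_subset ht, hcard]
  let e : (s : Set α) ≃ (t : Set α) := Finset.equivOfCardEq hcard
  let f : ((u \ s : Finset α) : Set α) ≃ ((u \ t : Finset α) : Set α) :=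
    Finset.equivOfCardEq hcard2
  let g : α → α := fun x =>
    if hx : x ∈ s then (e ⟨x, hx⟩ : α)
    else if hx' : x ∈ u then (f ⟨x, mem_sdiff.mpr ⟨hx', hx⟩⟩ : α)
    else x
  have hgs : ∀ x (hx : x ∈ s), g x = (e ⟨x, hx⟩ : α) := by
    intro x hx; simp only [g, dif_pos hx]
  have hgus : ∀ x (hx' : x ∈ u) (hx : x ∉ s),
      g x = (f ⟨x, mem_sdiff.mpr ⟨hx', hx⟩⟩ : α) := by
    intro x hx' hx; simp only [g, dif_neg hx, dif_pos hx']
  have hgo : ∀ x, x ∉ u → g x = x := by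
    intro x hx
    have hxs : x ∉ s := fun h => hx (hs h)
    simp only [g, dif_neg hxs, dif_neg hx]
  have hmem_t : ∀ x, x ∈ s → g x ∈ t := by
    intro x hx; rw [hgs x hx]; exact (e ⟨x, hx⟩).2
  have hmem_ut : ∀ x (hx' : x ∈ u), x ∉ s → g x ∈ u \ t := by
    intro x hx' hx; rw [hgus x hx' hx]
    exact Finset.mem_coe.mp (f ⟨x, mem_sdiff.mpr ⟨hx', hx⟩⟩).2
  have hinj : Function.Injective g := by
    intro x y hxy
    by_cases hx : x ∈ s
    · by_cases hy : y ∈ s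
      · have := hxy
        rw [hgs x hx, hgs y hy] at this
        have : (⟨x, hx⟩ : (s : Set α)) = ⟨y, hy⟩ := e.injective (Subtype.ext this)
        exact congrArg Subtype.val this
      · by_cases hy' : y ∈ u
        · have h1 := hmem_t x hx
          have h2 := hmem_ut y hy' hy
          rw [hxy] at h1
          exact absurd h1 (mem_sdiff.mp h2).2
        · have h1 := hmem_t x hx
          rw [hxy, hgo y hy'] at h1
          exact absurd (ht h1) hy'
    · by_cases hx' : x ∈ u
      · by_cases hy : y ∈ s
        · have h1 := hmem_t y hy
          have h2 := hmem_ut x hx' hx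
          rw [← hxy] at h1
          exact absurd h1 (mem_sdiff.mp h2).2
        · by_cases hy' : y ∈ u
          · have := hxy
            rw [hgus x hx' hx, hgus y hy' hy] at this
            have := f.injective (Subtype.ext this)
            exact congrArg Subtype.val this
          · have h1 := hmem_ut x hx' hx
            rw [hxy, hgo y hy'] at h1
            exact absurd (mem_sdiff.mp h1).1 hy'
      · by_cases hy : y ∈ s
        · have h1 := hmem_t y hy
          rw [← hxy, hgo x hx'] at h1
          exact absurd (ht h1) hx'
        · by_cases hy' : y ∈ u
          · have h1 := hmem_ut y hy' hy
            rw [← hxy, hgo x hx'] at h1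
            exact absurd (mem_sdiff.mp h1).1 hx'
          · rw [hgo x hx', hgo y hy'] at hxy; exact hxy
  let π : Equiv.Perm α := Equiv.ofBijective g (Finite.injective_iff_bijective.mp hinj)
  have hπ : ∀ x, π x = g x := fun x => rfl
  refine ⟨π, fun x hx => (hπ x).trans (hgo x hx), ?_, ?_⟩
  · apply Finset.eq_of_subset_of_card_le
    · intro y hy
      obtain ⟨x, hx, rfl⟩ := Finset.mem_image.mp hy
      rw [hπ x]; exact hmem_t x hx
    · rw [Finset.card_image_of_injective _ π.injective, hcard]
  · apply Finset.eq_of_subset_of_card_le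
    · intro y hy
      obtain ⟨x, hx, rfl⟩ := Finset.mem_image.mp hy
      rw [hπ x]
      by_cases hxs : x ∈ s
      · exact ht (hmem_t x hxs)
      · exact (mem_sdiff.mp (hmem_ut x hx hxs)).1
    · rw [Finset.card_image_of_injective _ π.injective]

end JohnsonAux

namespace JohnsonAux
open Finset

/-- A permutation of the ground set fixing `w` and carrying `v` to `v'`,
whenever `v` and `v'` have the same intersection size with `w`. -/
lemma exists_perm_johnson {n k : ℕ} (w v v' : JVertex n k)
    (h : (v.1 ∩ w.1).card = (v'.1 ∩ w.1).card) :
    ∃ π : Equiv.Perm (Fin n), w.1.image π = w.1 ∧ v.1.image π = v'.1 := by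
  classical
  obtain ⟨π₁, hπ₁o, hπ₁s, hπ₁u⟩ :=
    exists_perm_finset (v.1 ∩ w.1) (v'.1 ∩ w.1) w.1 inter_subset_right
      inter_subset_right h
  have hcb : (v.1 \ w.1).card = (v'.1 \ w.1).card := by
    have h1 : (v.1 ∩ w.1).card + (v.1 \ w.1).card = v.1.card :=
      Finset.card_inter_add_card_sdiff v.1 w.1
    have h2 : (v'.1 ∩ w.1).card + (v'.1 \ w.1).card = v'.1.card :=
      Finset.card_inter_add_card_sdiff v'.1 w.1
    rw [v.2] at h1; rw [v'.2] at h2; omega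
  obtain ⟨π₂, hπ₂o, hπ₂s, hπ₂u⟩ :=
    exists_perm_finset (v.1 \ w.1) (v'.1 \ w.1) (Finset.univ \ w.1)
      (fun x hx => mem_sdiff.mpr ⟨mem_univ x, (mem_sdiff.mp hx).2⟩)
      (fun x hx => mem_sdiff.mpr ⟨mem_univ x, (mem_sdiff.mp hx).2⟩) hcb
  refine ⟨π₁.trans π₂, ?_, ?_⟩
  · have h1 : w.1.image (π₁.trans π₂) = (w.1.image π₁).image π₂ := by
      rw [Finset.image_image]; rfl
    rw [h1, hπ₁u]
    have : ∀ x ∈ w.1, π₂ x = x := fun x hx =>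
      hπ₂o x (fun hc => (mem_sdiff.mp hc).2 hx)
    calc w.1.image π₂ = w.1.image id := Finset.image_congr (fun x hx => this x hx)
    _ = w.1 := Finset.image_id
  · have h1 : v.1.image (π₁.trans π₂) = (v.1.image π₁).image π₂ := by
      rw [Finset.image_image]; rfl
    have hius : ∀ s t : Finset (Fin n), s ∩ t ∪ s \ t = s := by
      intro s t; ext a; simp only [Finset.mem_union, Finset.mem_inter, Finset.mem_sdiff]; tauto
    have hsplit : v.1 = (v.1 ∩ w.1) ∪ (v.1 \ w.1) := (hius _ _).symm
    have hb : (v.1 \ w.1).image π₁ = v.1 \ w.1 := by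
      calc (v.1 \ w.1).image π₁ = (v.1 \ w.1).image id :=
            Finset.image_congr (fun x hx => hπ₁o x (mem_sdiff.mp hx).2)
      _ = _ := Finset.image_id
    have ha' : (v'.1 ∩ w.1).image π₂ = v'.1 ∩ w.1 := by
      calc (v'.1 ∩ w.1).image π₂ = (v'.1 ∩ w.1).image id :=
            Finset.image_congr (fun x hx =>
              hπ₂o x (fun hc => (mem_sdiff.mp hc).2 (mem_inter.mp hx).2))
      _ = _ := Finset.image_id
    rw [h1, hsplit, Finset.image_union, hπ₁s, hb, Finset.image_union, ha', hπ₂s,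
      hius]

/-- The vertex bijection induced by a permutation of the ground set. -/
def vmap {n k : ℕ} (π : Equiv.Perm (Fin n)) : JVertex n k ≃ JVertex n k where
  toFun v := ⟨v.1.image π, by rw [Finset.card_image_of_injective _ π.injective, v.2]⟩
  invFun v := ⟨v.1.image π.symm,
    by rw [Finset.card_image_of_injective _ π.symm.injective, v.2]⟩
  left_inv v := Subtype.ext (by
    simp [Finset.image_image, Function.comp_def])
  right_inv v := Subtype.ext (by
    simp [Finset.image_image, Function.comp_def])

lemma vmap_inter_card {n k : ℕ} (π : Equiv.Perm (Fin n)) (v u : JVertex n k) :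
    (((vmap π v).1 : Finset (Fin n)) ∩ (vmap π u).1).card = (v.1 ∩ u.1).card := by
  show ((v.1.image π) ∩ (u.1.image π)).card = _
  rw [← Finset.image_inter _ _ π.injective,
    Finset.card_image_of_injective _ π.injective]

lemma vmap_adj {n k : ℕ} (π : Equiv.Perm (Fin n)) (v u : JVertex n k) :
    (johnsonGraph n k).Adj (vmap π v) (vmap π u) ↔ (johnsonGraph n k).Adj v u := by
  show ((vmap π v ≠ vmap π u) ∧ _) ↔ _
  rw [vmap_inter_card]
  constructor
  · rintro ⟨h1, h2⟩; exact ⟨fun hc => h1 (by rw [hc]), h2⟩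
  · rintro ⟨h1, h2⟩; exact ⟨fun hc => h1 ((vmap π).injective hc), h2⟩

lemma vmap_cls {n k : ℕ} (π : Equiv.Perm (Fin n)) (w : JVertex n k)
    (hw : w.1.image π = w.1) (v : JVertex n k) :
    (((vmap π v).1 : Finset (Fin n)) ∩ w.1).card = (v.1 ∩ w.1).card := by
  conv_lhs => rw [← hw]
  exact vmap_inter_card π v w

end JohnsonAux

namespace JohnsonAux
open Finset

lemma sum_single_apply {ι : Type*} [Fintype ι] [DecidableEq ι] (S : Finset ι) (v : ι) :
    (∑ u ∈ S, EuclideanSpace.single u (1:ℝ)) v = (if v ∈ S then 1 else 0) := by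
  induction S using Finset.induction with
  | empty => simp
  | @insert a s ha ih =>
      rw [Finset.sum_insert ha, PiLp.add_apply, ih, EuclideanSpace.single_apply]
      by_cases h : v = a
      · subst h; simp [ha]
      · simp [h]

lemma sum_piLp_apply {ι κ : Type*} [Fintype ι] (S : Finset κ)
    (f : κ → EuclideanSpace ℝ ι) (v : ι) :
    (∑ u ∈ S, f u) v = ∑ u ∈ S, f u v := by
  classical
  induction S using Finset.induction with
  | empty => simp
  | @insert a s ha ih => rw [Finset.sum_insert ha, PiLp.add_apply, ih, Finset.sum_insert ha]

variable {n k : ℕ} (w : JVertex n k)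

lemma mem_nuSet_iff {ℓ : ℕ} {v : JVertex n k} :
    v ∈ nuSet n k w ℓ ↔ (v.1 ∩ w.1).card = k - ℓ := by
  simp [nuSet]

lemma nuVec_apply (ℓ : ℕ) (v : JVertex n k) :
    nuVec n k w ℓ v =
      (Real.sqrt (nuSet n k w ℓ).card)⁻¹ * (if v ∈ nuSet n k w ℓ then 1 else 0) := by
  rw [nuVec, PiLp.smul_apply, sum_single_apply, smul_eq_mul]

lemma cls_le (v : JVertex n k) : (v.1 ∩ w.1).card ≤ k := by
  exact le_trans (card_le_card inter_subset_right) (le_of_eq w.2)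

lemma mem_nuSet_self (v : JVertex n k) :
    v ∈ nuSet n k w (k - (v.1 ∩ w.1).card) := by
  rw [mem_nuSet_iff]
  have := cls_le w v
  omega

lemma eq_of_mem_nuSet {ℓ : ℕ} (hℓ : ℓ ≤ k) {v : JVertex n k}
    (hv : v ∈ nuSet n k w ℓ) : ℓ = k - (v.1 ∩ w.1).card := by
  rw [mem_nuSet_iff] at hv
  omega

lemma nuSet_nonempty (hn : 2 * k ≤ n) {ℓ : ℕ} (hℓ : ℓ ≤ k) :
    (nuSet n k w ℓ).Nonempty := by
  classical
  obtain ⟨s, hs, hscard⟩ := Finset.exists_subset_card_eq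
    (show k - ℓ ≤ w.1.card by rw [w.2]; omega)
  obtain ⟨t, ht, htcard⟩ := Finset.exists_subset_card_eq
    (show ℓ ≤ (w.1ᶜ : Finset (Fin n)).card by
      rw [Finset.card_compl, w.2, Fintype.card_fin]; omega)
  have hdisj : Disjoint s t := by
    refine Finset.disjoint_left.mpr fun a ha hat => ?_
    exact (Finset.mem_compl.mp (ht hat)) (hs ha)
  have hcard : (s ∪ t).card = k := by
    rw [Finset.card_union_of_disjoint hdisj, hscard, htcard]; omega
  refine ⟨⟨s ∪ t, hcard⟩, ?_⟩
  rw [mem_nuSet_iff]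
  have h1 : (s ∪ t) ∩ w.1 = s := by
    rw [Finset.union_inter_distrib_right]
    have h2 : t ∩ w.1 = ∅ := by
      refine Finset.eq_empty_of_forall_notMem fun a ha => ?_
      obtain ⟨h3, h4⟩ := Finset.mem_inter.mp ha
      exact (Finset.mem_compl.mp (ht h3)) h4
    have h3 : s ∩ w.1 = s := Finset.inter_eq_left.mpr hs
    rw [h2, h3, Finset.union_empty]
  rw [h1, hscard]

/-- The constancy predicate defining the span of the `nuVec`s. -/
def IsClassConst (x : EuclideanSpace ℝ (JVertex n k)) : Prop :=
  ∀ v v' : JVertex n k, (v.1 ∩ w.1).card = (v'.1 ∩ w.1).card → x v = x v'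

lemma isClassConst_of_mem_span {x : EuclideanSpace ℝ (JVertex n k)}
    (hx : x ∈ Submodule.span ℝ (nuVec n k w '' {ℓ : ℕ | ℓ ≤ k})) :
    IsClassConst w x := by
  induction hx using Submodule.span_induction with
  | mem y hy =>
      obtain ⟨ℓ, -, rfl⟩ := hy
      intro v v' h
      simp only [nuVec_apply, mem_nuSet_iff, h]
  | zero => intro v v' _; rfl
  | add y z _ _ hy hz => intro v v' h; rw [PiLp.add_apply, PiLp.add_apply, hy v v' h, hz v v' h]
  | smul c y _ hy => intro v v' h; rw [PiLp.smul_apply, PiLp.smul_apply, hy v v' h]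

lemma mem_span_of_isClassConst {x : EuclideanSpace ℝ (JVertex n k)}
    (hx : IsClassConst w x) :
    x ∈ Submodule.span ℝ (nuVec n k w '' {ℓ : ℕ | ℓ ≤ k}) := by
  have hrep : x = ∑ ℓ ∈ Finset.range (k+1),
      ((Real.sqrt (nuSet n k w ℓ).card)⁻¹ * ∑ v ∈ nuSet n k w ℓ, x v) • nuVec n k w ℓ := by
    ext u
    rw [sum_piLp_apply]
    set ℓ₀ := k - (u.1 ∩ w.1).card with hℓ₀
    have hu : u ∈ nuSet n k w ℓ₀ := mem_nuSet_self w u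
    have hN : (0:ℝ) < (nuSet n k w ℓ₀).card := by
      have : 0 < (nuSet n k w ℓ₀).card := Finset.card_pos.mpr ⟨u, hu⟩
      exact_mod_cast this
    rw [Finset.sum_eq_single ℓ₀]
    · rw [PiLp.smul_apply, nuVec_apply, if_pos hu, smul_eq_mul]
      have hsum : ∑ v ∈ nuSet n k w ℓ₀, x v = ((nuSet n k w ℓ₀).card : ℝ) * x u := by
        rw [Finset.sum_congr rfl (fun v hv => hx v u (by
          rw [mem_nuSet_iff] at hu hv; rw [hv, hu]))]
        rw [Finset.sum_const, nsmul_eq_mul]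
      rw [hsum]
      have hss : Real.sqrt ((nuSet n k w ℓ₀).card) * Real.sqrt ((nuSet n k w ℓ₀).card)
          = ((nuSet n k w ℓ₀).card : ℝ) := Real.mul_self_sqrt (le_of_lt hN)
      field_simp
      rw [Real.sq_sqrt (le_of_lt hN)]
    · intro ℓ hℓ hne
      rw [PiLp.smul_apply, nuVec_apply, if_neg, mul_zero, smul_zero]
      intro hc
      exact hne ((eq_of_mem_nuSet w (Nat.lt_succ_iff.mp (Finset.mem_range.mp hℓ)) hc).trans hℓ₀.symm)
    · intro h
      exact absurd (Finset.mem_range.mpr (Nat.lt_succ_of_le (Nat.sub_le _ _))) h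
  rw [hrep]
  exact Submodule.sum_mem _ fun ℓ hℓ => Submodule.smul_mem _ _
    (Submodule.subset_span ⟨ℓ, Nat.lt_succ_iff.mp (Finset.mem_range.mp hℓ), rfl⟩)

lemma toEuclideanLin_apply' {ι : Type*} [Fintype ι] [DecidableEq ι]
    (M : Matrix ι ι ℝ) (x : EuclideanSpace ℝ ι) (v : ι) :
    (Matrix.toEuclideanLin M x) v = ∑ u, M v u * x u := by
  simp [Matrix.toEuclideanLin_apply, Matrix.mulVec, dotProduct]

lemma adj_isClassConst {x : EuclideanSpace ℝ (JVertex n k)} (hx : IsClassConst w x) :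
    IsClassConst w (Matrix.toEuclideanLin (SimpleGraph.adjMatrix ℝ (johnsonGraph n k)) x) := by
  intro v v' h
  obtain ⟨π, hπw, hπv⟩ := exists_perm_johnson w v v' h
  have hφv : vmap π v = v' := Subtype.ext hπv
  rw [toEuclideanLin_apply', toEuclideanLin_apply']
  rw [← Equiv.sum_comp (vmap (n := n) (k := k) π)
    (fun u => SimpleGraph.adjMatrix ℝ (johnsonGraph n k) v' u * x u)]
  refine Finset.sum_congr rfl fun u _ => ?_
  have h1 : SimpleGraph.adjMatrix ℝ (johnsonGraph n k) v' (vmap π u)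
      = SimpleGraph.adjMatrix ℝ (johnsonGraph n k) v u := by
    rw [← hφv, SimpleGraph.adjMatrix_apply, SimpleGraph.adjMatrix_apply]
    by_cases hadj : (johnsonGraph n k).Adj v u
    · rw [if_pos ((vmap_adj π v u).mpr hadj), if_pos hadj]
    · rw [if_neg (fun hc => hadj ((vmap_adj π v u).mp hc)), if_neg hadj]
  have h2 : x (vmap π u) = x u := hx _ _ (vmap_cls π w hπw u)
  rw [h1, h2]

lemma nuSet_zero : nuSet n k w 0 = {w} := by
  ext v
  rw [mem_nuSet_iff, Finset.mem_singleton, Nat.sub_zero]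
  constructor
  · intro hc
    have h1 : v.1 ∩ w.1 = w.1 := Finset.eq_of_subset_of_card_le inter_subset_right
      (by rw [hc, w.2])
    have h2 : w.1 ⊆ v.1 := by rw [← h1]; exact inter_subset_left
    have h3 : v.1 = w.1 := (Finset.eq_of_subset_of_card_le h2 (by rw [v.2, w.2])).symm
    exact Subtype.ext h3
  · rintro rfl
    rw [Finset.inter_self, v.2]

lemma nuVec_zero : nuVec n k w 0 = EuclideanSpace.single w 1 := by
  rw [nuVec, nuSet_zero]
  simp

lemma stdBasis_apply_eq (x : EuclideanSpace ℝ (JVertex n k)) :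
    Matrix.toEuclideanLin (Matrix.single w w (1 : ℝ)) x = x w • nuVec n k w 0 := by
  ext v
  rw [toEuclideanLin_apply', PiLp.smul_apply, nuVec_zero, EuclideanSpace.single_apply,
    smul_eq_mul]
  have hterm : ∀ u, Matrix.single w w (1:ℝ) v u * x u
      = if u = w then (x w * if v = w then 1 else 0) else 0 := by
    intro u
    rw [Matrix.single]
    by_cases h1 : u = w <;> by_cases h2 : v = w <;>
      simp [h1, h2, Matrix.of_apply] <;> tauto
  rw [Finset.sum_congr rfl (fun u _ => hterm u), Finset.sum_ite_eq' Finset.univ w,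
    if_pos (Finset.mem_univ w)]

end JohnsonAux

open JohnsonAux in
/-- the `(k+1)`-dimensional span of the vectors `|ν_ℓ⟩`, `0 ≤ ℓ ≤ k`, is
invariant under the adjacency operator `A` of `J(n,k)`, under the rank-one operator
`|w⟩⟨w|`, and hence under `H = −γA − |w⟩⟨w|` for every real `γ`. -/
theorem johnson_invariant_subspace (n k : ℕ) (hk : 1 ≤ k) (hn : 2 * k ≤ n)
    (w : JVertex n k) :
    Module.finrank ℝ
        (Submodule.span ℝ (nuVec n k w '' {ℓ : ℕ | ℓ ≤ k})) = k + 1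
    ∧ (∀ x ∈ Submodule.span ℝ (nuVec n k w '' {ℓ : ℕ | ℓ ≤ k}),
        Matrix.toEuclideanLin (SimpleGraph.adjMatrix ℝ (johnsonGraph n k)) x
          ∈ Submodule.span ℝ (nuVec n k w '' {ℓ : ℕ | ℓ ≤ k}))
    ∧ (∀ x ∈ Submodule.span ℝ (nuVec n k w '' {ℓ : ℕ | ℓ ≤ k}),
        Matrix.toEuclideanLin (Matrix.single w w (1 : ℝ)) x
          ∈ Submodule.span ℝ (nuVec n k w '' {ℓ : ℕ | ℓ ≤ k}))
    ∧ ∀ γ : ℝ, ∀ x ∈ Submodule.span ℝ (nuVec n k w '' {ℓ : ℕ | ℓ ≤ k}),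
        ((-γ) • Matrix.toEuclideanLin (SimpleGraph.adjMatrix ℝ (johnsonGraph n k))
          - Matrix.toEuclideanLin (Matrix.single w w (1 : ℝ))) x
          ∈ Submodule.span ℝ (nuVec n k w '' {ℓ : ℕ | ℓ ≤ k}) := by
  classical
  have hAinv : ∀ x ∈ Submodule.span ℝ (nuVec n k w '' {ℓ : ℕ | ℓ ≤ k}),
      Matrix.toEuclideanLin (SimpleGraph.adjMatrix ℝ (johnsonGraph n k)) x
        ∈ Submodule.span ℝ (nuVec n k w '' {ℓ : ℕ | ℓ ≤ k}) := fun x hx =>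
    mem_span_of_isClassConst w (adj_isClassConst w (isClassConst_of_mem_span w hx))
  have hBinv : ∀ x ∈ Submodule.span ℝ (nuVec n k w '' {ℓ : ℕ | ℓ ≤ k}),
      Matrix.toEuclideanLin (Matrix.single w w (1 : ℝ)) x
        ∈ Submodule.span ℝ (nuVec n k w '' {ℓ : ℕ | ℓ ≤ k}) := by
    intro x hx
    rw [stdBasis_apply_eq]
    exact Submodule.smul_mem _ _ (Submodule.subset_span ⟨0, Nat.zero_le k, rfl⟩)
  refine ⟨?_, hAinv, hBinv, ?_⟩
  · have hrange : nuVec n k w '' {ℓ : ℕ | ℓ ≤ k}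
        = Set.range (fun i : Fin (k+1) => nuVec n k w i) := by
      ext y
      constructor
      · rintro ⟨ℓ, hℓ, rfl⟩; exact ⟨⟨ℓ, Nat.lt_succ_of_le hℓ⟩, rfl⟩
      · rintro ⟨i, rfl⟩; exact ⟨i, Nat.lt_succ_iff.mp i.isLt, rfl⟩
    have hli : LinearIndependent ℝ (fun i : Fin (k+1) => nuVec n k w i) := by
      apply linearIndependent_of_ne_zero_of_inner_eq_zero
      · intro i hzero
        obtain ⟨v, hv⟩ := nuSet_nonempty w hn (Nat.lt_succ_iff.mp i.isLt)
        have h1 : nuVec n k w i v = 0 := by rw [hzero]; rfl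
        rw [nuVec_apply, if_pos hv, mul_one] at h1
        have hN : (0:ℝ) < ((nuSet n k w i).card : ℝ) := by
          exact_mod_cast Finset.card_pos.mpr ⟨v, hv⟩
        exact (inv_ne_zero (ne_of_gt (Real.sqrt_pos.mpr hN))) h1
      · intro i j hij
        have hinner : (inner ℝ (nuVec n k w i) (nuVec n k w j) : ℝ)
            = ∑ v, nuVec n k w i v * nuVec n k w j v := by
          simp [PiLp.inner_apply, mul_comm]
        rw [hinner]
        refine Finset.sum_eq_zero fun v _ => ?_
        by_cases h1 : v ∈ nuSet n k w i
        · have h2 : v ∉ nuSet n k w j := by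
            intro h2
            apply hij
            apply Fin.ext
            rw [eq_of_mem_nuSet w (Nat.lt_succ_iff.mp i.isLt) h1,
              eq_of_mem_nuSet w (Nat.lt_succ_iff.mp j.isLt) h2]
          rw [nuVec_apply w (j : ℕ) v, if_neg h2, mul_zero, mul_zero]
        · rw [nuVec_apply w (i : ℕ) v, if_neg h1, mul_zero, zero_mul]
    rw [hrange]
    simpa using finrank_span_eq_card hli
  · intro γ x hx
    simp only [LinearMap.sub_apply, LinearMap.smul_apply]
    exact Submodule.sub_mem _ (Submodule.smul_mem _ _ (hAinv x hx)) (hBinv x hx)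
end

section
/- (Wilcox's formula.) Let M : ℝ → M_d(ℂ) be a continuously differentiable matrix-valued function of a real variable η. Then for all real t and η, the partial derivative in η of exp(M(η)t) exists and equals ∫₀^t exp(M(η)(t−s)) · M'(η) · exp(M(η)s) ds. -/
open scoped Matrix.Norms.L2Operator
open NormedSpace Filter Topology intervalIntegral MeasureTheory

namespace WilcoxAux

variable {d : ℕ}

private lemma exp_continuous' : Continuous (exp : Matrix (Fin d) (Fin d) ℂ → _) := by
  letI : NormedAlgebra ℚ (Matrix (Fin d) (Fin d) ℂ) := .restrictScalars ℚ ℂ _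
  exact exp_continuous

private lemma hasDerivAt_exp_left (A : Matrix (Fin d) (Fin d) ℂ) (t s : ℝ) :
    HasDerivAt (fun s : ℝ => exp (((t - s : ℝ) : ℂ) • A))
      (-(exp (((t - s : ℝ) : ℂ) • A) * A)) s := by
  have h1 : HasDerivAt (fun s : ℝ => ((t - s : ℝ) : ℂ)) (-1) s := by
    simpa using (Complex.ofRealCLM.hasDerivAt (x := s)).const_sub (t : ℂ)
  have h2 := hasDerivAt_exp_smul_const (𝕂 := ℂ) A (((t - s : ℝ) : ℂ))
  have h3 := h2.scomp (x := s) h1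
  simpa [Function.comp_def, neg_smul] using h3

private lemma hasDerivAt_exp_right (B : Matrix (Fin d) (Fin d) ℂ) (s : ℝ) :
    HasDerivAt (fun s : ℝ => exp ((s : ℂ) • B))
      (exp ((s : ℂ) • B) * B) s := by
  have h1 : HasDerivAt (fun s : ℝ => ((s : ℝ) : ℂ)) 1 s := by
    simpa using (hasDerivAt_id s).ofReal_comp
  have h2 := hasDerivAt_exp_smul_const (𝕂 := ℂ) B ((s : ℝ) : ℂ)
  have h3 := h2.scomp (x := s) h1
  simpa [Function.comp_def] using h3

private lemma cont_exp_left (A : Matrix (Fin d) (Fin d) ℂ) (t : ℝ) :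
    Continuous fun s : ℝ => exp (((t - s : ℝ) : ℂ) • A) :=
  exp_continuous'.comp ((Complex.continuous_ofReal.comp
    (continuous_const.sub continuous_id)).smul continuous_const)

private lemma cont_exp_right (B : Matrix (Fin d) (Fin d) ℂ) :
    Continuous fun s : ℝ => exp ((s : ℂ) • B) :=
  exp_continuous'.comp (Complex.continuous_ofReal.smul continuous_const)

private lemma duhamel (A B : Matrix (Fin d) (Fin d) ℂ) (t : ℝ) :
    exp ((t : ℂ) • B) - exp ((t : ℂ) • A) =
      ∫ s in (0:ℝ)..t,
        exp (((t - s : ℝ) : ℂ) • A) * (B - A) * exp ((s : ℂ) • B) := by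
  have key : ∀ s ∈ Set.uIcc (0:ℝ) t,
      HasDerivAt (fun s : ℝ => exp (((t - s : ℝ) : ℂ) • A) * exp ((s : ℂ) • B))
        (exp (((t - s : ℝ) : ℂ) • A) * (B - A) * exp ((s : ℂ) • B)) s := by
    intro s _
    have h := (hasDerivAt_exp_left A t s).mul (hasDerivAt_exp_right B s)
    refine h.congr_deriv ?_
    have hA : A * exp (((t - s : ℝ) : ℂ) • A) = exp (((t - s : ℝ) : ℂ) • A) * A :=
      (((Commute.refl A).smul_right (((t - s : ℝ) : ℂ))).exp_right)
    have hB : B * exp ((s : ℂ) • B) = exp ((s : ℂ) • B) * B :=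
      (((Commute.refl B).smul_right ((s : ℂ))).exp_right)
    rw [← hB]
    noncomm_ring
  have hint : IntervalIntegrable
      (fun s : ℝ => exp (((t - s : ℝ) : ℂ) • A) * (B - A) * exp ((s : ℂ) • B))
      volume 0 t :=
    (((cont_exp_left A t).mul continuous_const).mul (cont_exp_right B)).intervalIntegrable 0 t
  have := intervalIntegral.integral_eq_sub_of_hasDerivAt key hint
  rw [this]
  simp

end WilcoxAux

open WilcoxAux

/-- Wilcox's formula: if `M : ℝ → M_d(ℂ)` is continuously differentiable,
then for all real `t` and `η`, the derivative in `η` of `exp(M(η)t)` exists and equals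
`∫₀ᵗ exp(M(η)(t−s)) M'(η) exp(M(η)s) ds`. -/
theorem wilcox_formula (d : ℕ) (M : ℝ → Matrix (Fin d) (Fin d) ℂ)
    (hM : ContDiff ℝ 1 M) (t η : ℝ) :
    HasDerivAt (fun x : ℝ => NormedSpace.exp (((t : ℂ)) • M x))
      (∫ s in (0 : ℝ)..t,
        NormedSpace.exp ((((t - s : ℝ) : ℂ)) • M η) * deriv M η
          * NormedSpace.exp (((s : ℂ)) • M η)) η := by
  set D := deriv M η with hD
  have hMd : HasDerivAt M D η := ((hM.differentiable one_ne_zero) η).hasDerivAt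
  set Q : ℝ → Matrix (Fin d) (Fin d) ℂ :=
    fun x => if x = η then D else (x - η)⁻¹ • (M x - M η) with hQdef
  -- Q tends to D at η
  have hQ : Tendsto Q (𝓝 η) (𝓝 D) := by
    have hslope : Tendsto (slope M η) (𝓝[≠] η) (𝓝 D) :=
      hasDerivAt_iff_tendsto_slope.mp hMd
    have h1 : Tendsto Q (𝓝[≠] η) (𝓝 D) := by
      refine hslope.congr' ?_
      filter_upwards [self_mem_nhdsWithin] with x hx
      have hx' : x ≠ η := hx
      simp only [hQdef, if_neg hx', slope_def_module]
    have h2 : Tendsto Q (pure η) (𝓝 D) := by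
      simp only [tendsto_pure_left, hQdef, if_pos rfl]
      exact fun s hs => mem_of_mem_nhds hs
    have := Tendsto.sup h1 h2
    rwa [nhdsNE_sup_pure] at this
  set g : ℝ → Matrix (Fin d) (Fin d) ℂ := fun x =>
    ∫ s in (0:ℝ)..t,
      exp (((t - s : ℝ) : ℂ) • M η) * Q x * exp ((s : ℂ) • M x) with hgdef
  -- key identity
  have hkey : ∀ x : ℝ,
      exp ((t : ℂ) • M x) - exp ((t : ℂ) • M η) = (x - η) • g x := by
    intro x
    by_cases hx : x = η
    · subst hx; simp
    · rw [duhamel (M η) (M x) t, hgdef]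
      rw [← intervalIntegral.integral_smul]
      congr 1
      funext s
      have hQx : (x - η) • Q x = M x - M η := by
        simp only [hQdef, if_neg hx]
        rw [smul_inv_smul₀ (sub_ne_zero.mpr hx)]
      rw [← hQx]
      simp [mul_smul_comm, smul_mul_assoc]
  -- continuity of g at η
  have hMc : Continuous M := hM.continuous
  have hg : Tendsto g (𝓝 η)
      (𝓝 (∫ s in (0:ℝ)..t,
        exp (((t - s : ℝ) : ℂ) • M η) * D * exp ((s : ℂ) • M η))) := by
    -- dominated convergence
    have hkcont : Continuous fun p : ℝ × ℝ =>
        ‖exp (((t - p.2 : ℝ) : ℂ) • M η)‖ * ‖exp ((p.2 : ℂ) • M p.1)‖ := by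
      apply Continuous.mul
      · exact ((cont_exp_left (M η) t).comp continuous_snd).norm
      · exact (exp_continuous'.comp
          (((Complex.continuous_ofReal.comp continuous_snd)).smul
            (hMc.comp continuous_fst))).norm
    obtain ⟨C, hC⟩ := ((isCompact_Icc (a := η - 1) (b := η + 1)).prod
      (isCompact_uIcc (a := (0:ℝ)) (b := t))).exists_bound_of_continuousOn
      hkcont.continuousOn
    apply intervalIntegral.tendsto_integral_filter_of_dominated_convergence
      (bound := fun _ => C * (‖D‖ + 1))
    · filter_upwards with x
      exact ((((cont_exp_left (M η) t).mul continuous_const).mul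
        (cont_exp_right (M x)))).aestronglyMeasurable
    · have hQb : ∀ᶠ x in 𝓝 η, ‖Q x‖ ≤ ‖D‖ + 1 := by
        filter_upwards [hQ (Metric.ball_mem_nhds D one_pos)] with x hx
        have : ‖Q x - D‖ < 1 := by simpa [dist_eq_norm] using hx
        calc ‖Q x‖ = ‖Q x - D + D‖ := by rw [sub_add_cancel]
          _ ≤ ‖Q x - D‖ + ‖D‖ := norm_add_le _ _
          _ ≤ ‖D‖ + 1 := by linarith
      have hIcc : Set.Icc (η - 1) (η + 1) ∈ 𝓝 η :=
        Icc_mem_nhds (by linarith) (by linarith)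
      filter_upwards [hQb, hIcc] with x hQx hxmem
      refine Filter.Eventually.of_forall fun s hs => ?_
      have hsK : s ∈ Set.uIcc (0:ℝ) t := Set.uIoc_subset_uIcc hs
      have hCk' : ‖exp (((t - s : ℝ) : ℂ) • M η)‖ * ‖exp ((s : ℂ) • M x)‖ ≤ C := by
        have h := hC (x, s) ⟨hxmem, hsK⟩
        rwa [Real.norm_eq_abs, abs_of_nonneg (by positivity)] at h
      calc ‖exp (((t - s : ℝ) : ℂ) • M η) * Q x * exp ((s : ℂ) • M x)‖
          ≤ ‖exp (((t - s : ℝ) : ℂ) • M η) * Q x‖ * ‖exp ((s : ℂ) • M x)‖ :=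
            norm_mul_le _ _
        _ ≤ (‖exp (((t - s : ℝ) : ℂ) • M η)‖ * ‖Q x‖) * ‖exp ((s : ℂ) • M x)‖ :=
            mul_le_mul_of_nonneg_right (norm_mul_le _ _) (norm_nonneg _)
        _ = (‖exp (((t - s : ℝ) : ℂ) • M η)‖ * ‖exp ((s : ℂ) • M x)‖) * ‖Q x‖ := by
            ring
        _ ≤ C * (‖D‖ + 1) := by
            apply mul_le_mul hCk' hQx (norm_nonneg _)
            exact le_trans (by positivity) hCk'
    · exact intervalIntegrable_const
    · refine Filter.Eventually.of_forall fun s _ => ?_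
      have h1 : Tendsto (fun x => exp ((s : ℂ) • M x)) (𝓝 η)
          (𝓝 (exp ((s : ℂ) • M η))) :=
        ((exp_continuous'.comp (hMc.const_smul ((s : ℝ) : ℂ))).tendsto η)
      exact (tendsto_const_nhds.mul hQ).mul h1
  -- conclude
  rw [hasDerivAt_iff_tendsto_slope]
  have heq : slope (fun x : ℝ => exp ((t : ℂ) • M x)) η =ᶠ[𝓝[≠] η] g := by
    filter_upwards [self_mem_nhdsWithin] with x hx
    rw [slope_def_module, hkey x, smul_smul,
      inv_mul_cancel₀ (sub_ne_zero.mpr hx), one_smul]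
  exact (hg.mono_left nhdsWithin_le_nhds).congr' heq.symm
end

section
/- Fix an integer k ≥ 1 and a real number a ≠ 0. For 0 ≤ ℓ ≤ k define the real-analytic functions r_ℓ(ε) = (k−ℓ)(1−(k+ℓ)ε²) − ℓε² and p_ℓ(ε) = ε^{k−ℓ} √( k!(1−(2ℓ−1)ε²) / ( ℓ! (1−(ℓ−1)ε²)(1−ℓε²)⋯(1−(k−1)ε²) ) ) on a neighborhood of ε = 0. Then there exist δ > 0 and real-analytic functions η, ξ_0, ξ_1, …, ξ_k, λ on (−δ, δ) with η(0) = k, λ(0) = k, ξ_0 ≡ a, ξ_k(0) = 1, and ξ_ℓ(0) = 0 for 1 ≤ ℓ ≤ k−1, such that for all ε ∈ (−δ, δ): Σ_{ℓ=0}^{k} p_ℓ(ε) ξ_ℓ(ε) = 1 and λ(ε) ξ_ℓ(ε) = r_ℓ(ε) ξ_ℓ(ε) + η(ε) p_ℓ(ε) for every 0 ≤ ℓ ≤ k; i.e., (ξ_0(ε),…,ξ_k(ε))ᵀ is an eigenvector of the matrix diag(r_0(ε),…,r_k(ε)) + η(ε)(p_ℓ(ε)p_{ℓ'}(ε))_{ℓ,ℓ'}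 with eigenvalue λ(ε). -/
open scoped BigOperators

/-- `r_ℓ(ε) = (k−ℓ)(1−(k+ℓ)ε²) − ℓε²` (the rescaled eigenvalue `ε²λ_ℓ` under `n = 1/ε²`). -/
noncomputable def rFun (k ℓ : ℕ) (ε : ℝ) : ℝ :=
  ((k : ℝ) - ℓ) * (1 - ((k : ℝ) + ℓ) * ε ^ 2) - ℓ * ε ^ 2

/-- `p_ℓ(ε) = ε^{k−ℓ} √( k!(1−(2ℓ−1)ε²) / ( ℓ!(1−(ℓ−1)ε²)(1−ℓε²)⋯(1−(k−1)ε²) ) )`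
(the overlap `‖P_ℓ|w⟩‖` under `n = 1/ε²`). -/
noncomputable def pFun (k ℓ : ℕ) (ε : ℝ) : ℝ :=
  ε ^ (k - ℓ) *
    Real.sqrt ((k.factorial : ℝ) * (1 - (2 * (ℓ : ℝ) - 1) * ε ^ 2) /
      ((ℓ.factorial : ℝ) *
        ∏ j ∈ Finset.range (k - ℓ + 1), (1 - (((ℓ : ℝ) - 1) + j) * ε ^ 2)))


section AuxEigBranch
open scoped ContDiff
open Filter Topology

open scoped ContDiff

noncomputable def q (k ℓ : ℕ) (ε : ℝ) : ℝ :=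
  (k.factorial : ℝ) * (1 - (2 * (ℓ : ℝ) - 1) * ε ^ 2) /
    ((ℓ.factorial : ℝ) *
      ∏ j ∈ Finset.range (k - ℓ + 1), (1 - (((ℓ : ℝ) - 1) + j) * ε ^ 2))

noncomputable def DD (k ℓ : ℕ) (μ ε : ℝ) : ℝ :=
  (ℓ : ℝ) * (1 - ((ℓ : ℝ) - 1) * ε ^ 2) + ε ^ k * μ

lemma half_le {k : ℕ} {ε c : ℝ} (hb : ε^2*(2*(k:ℝ)) ≤ 1/2) (hc : c ≤ 2*(k:ℝ)) :
    (1:ℝ)/2 ≤ 1 - c * ε^2 := by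
  nlinarith [sq_nonneg ε, mul_nonneg (sub_nonneg.2 hc) (sq_nonneg ε)]

lemma den_pos {k ℓ : ℕ} (hℓ : ℓ ≤ k) {ε : ℝ} (hb : ε^2*(2*(k:ℝ)) ≤ 1/2) :
    0 < (ℓ.factorial : ℝ) * ∏ j ∈ Finset.range (k - ℓ + 1), (1 - (((ℓ : ℝ) - 1) + j) * ε ^ 2) := by
  apply mul_pos (by positivity)
  apply Finset.prod_pos
  intro j hj
  have hj' : j ≤ k - ℓ := Nat.lt_succ_iff.1 (Finset.mem_range.1 hj)
  have h2 : (ℓ:ℝ) + j ≤ k := by exact_mod_cast (show ℓ + j ≤ k by omega)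
  have := half_le (k := k) hb (c := ((ℓ : ℝ) - 1) + j) (by linarith)
  linarith

lemma q_pos {k ℓ : ℕ} (hℓ : ℓ ≤ k) {ε : ℝ} (hb : ε^2*(2*(k:ℝ)) ≤ 1/2) : 0 < q k ℓ ε := by
  apply div_pos _ (den_pos hℓ hb)
  have hc : (ℓ:ℝ) ≤ k := by exact_mod_cast hℓ
  have h1 := half_le (k := k) hb (c := 2*(ℓ:ℝ) - 1) (by linarith)
  have h2 : (0:ℝ) < k.factorial := by positivity
  nlinarith

lemma cdProd {ι : Type*} {s : Finset ι} {f : ι → ℝ → ℝ} {n : WithTop ℕ∞} {x : ℝ}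
    (h : ∀ i ∈ s, ContDiffAt ℝ n (f i) x) :
    ContDiffAt ℝ n (fun y => ∏ i ∈ s, f i y) x := by
  classical
  induction s using Finset.induction with
  | empty => simpa using contDiffAt_const
  | @insert i s' hi ih =>
    simp only [Finset.prod_insert hi]
    exact (h i (by simp)).mul (ih fun j hj => h j (by simp [hj]))

lemma q_cd {k ℓ : ℕ} (hℓ : ℓ ≤ k) {x : ℝ} (hb : x^2*(2*(k:ℝ)) ≤ 1/2) :
    ContDiffAt ℝ ω (q k ℓ) x := by
  apply ContDiffAt.div
  · exact contDiffAt_const.mul (contDiffAt_const.sub (contDiffAt_const.mul (contDiffAt_id.pow 2)))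
  · exact contDiffAt_const.mul (cdProd fun j hj =>
      contDiffAt_const.sub (contDiffAt_const.mul (contDiffAt_id.pow 2)))
  · exact (den_pos hℓ hb).ne'

lemma sqrt_q_cd {k ℓ : ℕ} (hℓ : ℓ ≤ k) {x : ℝ} (hb : x^2*(2*(k:ℝ)) ≤ 1/2) :
    ContDiffAt ℝ ω (fun ε => Real.sqrt (q k ℓ ε)) x :=
  (q_cd hℓ hb).sqrt (q_pos hℓ hb).ne'

lemma q_zero (k ℓ : ℕ) : q k ℓ 0 = (k.factorial : ℝ) / ℓ.factorial := by
  simp [q]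

lemma DD_zero (k ℓ : ℕ) (hk : 1 ≤ k) (μ : ℝ) : DD k ℓ μ 0 = ℓ := by
  simp [DD, zero_pow (by omega : k ≠ 0)]
open scoped ContDiff

noncomputable def FF (k : ℕ) (a : ℝ) (p : ℝ × ℝ) : ℝ :=
  a * p.1 ^ k * Real.sqrt (q k 0 p.1) +
    (a * p.2 / Real.sqrt (q k 0 p.1)) *
      ∑ ℓ ∈ Finset.Icc 1 k, p.1 ^ (2 * (k - ℓ)) * q k ℓ p.1 / DD k ℓ p.2 p.1 - 1

lemma q_kk_zero (k : ℕ) : q k k 0 = 1 := by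
  rw [q_zero, div_self (by positivity)]

lemma sqrt_q0_zero (k : ℕ) : Real.sqrt (q k 0 0) = Real.sqrt k.factorial := by
  rw [q_zero]; norm_num

lemma FF_zero (k : ℕ) (hk : 1 ≤ k) (a μ : ℝ) :
    FF k a (0, μ) = a * μ / ((k : ℝ) * Real.sqrt k.factorial) - 1 := by
  have hkr : (0:ℝ) < k := by exact_mod_cast hk
  have hs : (0:ℝ) < Real.sqrt k.factorial := Real.sqrt_pos.2 (by positivity)
  have hsum : ∑ ℓ ∈ Finset.Icc 1 k, (0:ℝ) ^ (2 * (k - ℓ)) * q k ℓ 0 / DD k ℓ μ 0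
      = 1 / k := by
    rw [Finset.sum_eq_single_of_mem k (by simp [hk])]
    · rw [DD_zero k k hk, q_kk_zero]
      simp
    · intro ℓ hℓ hne
      have : 2 * (k - ℓ) ≠ 0 := by
        simp only [Finset.mem_Icc] at hℓ; omega
      rw [zero_pow this]
      simp
  show a * (0:ℝ) ^ k * Real.sqrt (q k 0 0) +
    (a * μ / Real.sqrt (q k 0 0)) *
      ∑ ℓ ∈ Finset.Icc 1 k, (0:ℝ) ^ (2 * (k - ℓ)) * q k ℓ 0 / DD k ℓ μ 0 - 1 = _
  rw [hsum, sqrt_q0_zero, zero_pow (by omega : k ≠ 0)]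
  field_simp
  ring

noncomputable def mu0 (k : ℕ) (a : ℝ) : ℝ := (k : ℝ) * Real.sqrt k.factorial / a

lemma FF_c (k : ℕ) (hk : 1 ≤ k) (a : ℝ) (ha : a ≠ 0) : FF k a (0, mu0 k a) = 0 := by
  have hkr : (0:ℝ) < k := by exact_mod_cast hk
  have hs : (0:ℝ) < Real.sqrt k.factorial := Real.sqrt_pos.2 (by positivity)
  rw [FF_zero k hk, mu0]
  field_simp
  norm_num


section T3
open scoped ContDiff

variable {k : ℕ} {a : ℝ}

lemma cdSum {ι : Type*} {s : Finset ι} {E : Type*} [NormedAddCommGroup E] [NormedSpace ℝ E]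
    {f : ι → E → ℝ} {n : WithTop ℕ∞} {x : E}
    (h : ∀ i ∈ s, ContDiffAt ℝ n (f i) x) :
    ContDiffAt ℝ n (fun y => ∑ i ∈ s, f i y) x := by
  classical
  induction s using Finset.induction with
  | empty => simpa using contDiffAt_const
  | @insert i s' hi ih =>
    simp only [Finset.sum_insert hi]
    exact (h i (by simp)).add (ih fun j hj => h j (by simp [hj]))

lemma cdProdE {ι : Type*} {s : Finset ι} {E : Type*} [NormedAddCommGroup E] [NormedSpace ℝ E]
    {f : ι → E → ℝ} {n : WithTop ℕ∞} {x : E}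
    (h : ∀ i ∈ s, ContDiffAt ℝ n (f i) x) :
    ContDiffAt ℝ n (fun y => ∏ i ∈ s, f i y) x := by
  classical
  induction s using Finset.induction with
  | empty => simpa using contDiffAt_const
  | @insert i s' hi ih =>
    simp only [Finset.prod_insert hi]
    exact (h i (by simp)).mul (ih fun j hj => h j (by simp [hj]))

lemma q_comp_cd {ℓ : ℕ} (hℓ : ℓ ≤ k) {c : ℝ × ℝ} (hb : c.1^2*(2*(k:ℝ)) ≤ 1/2) :
    ContDiffAt ℝ ω (fun p : ℝ × ℝ => q k ℓ p.1) c := by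
  exact (q_cd hℓ hb).comp c contDiffAt_fst

lemma FF_cd (hk : 1 ≤ k) (ha : a ≠ 0) :
    ContDiffAt ℝ ω (FF k a) (0, mu0 k a) := by
  have hb : ((0:ℝ),mu0 k a).1^2*(2*(k:ℝ)) ≤ 1/2 := by norm_num
  have hq0 : (0:ℝ) < q k 0 ((0:ℝ),mu0 k a).1 := q_pos (by omega) hb
  have hs : Real.sqrt (q k 0 ((0:ℝ),mu0 k a).1) ≠ 0 := by
    positivity
  have hsq : ContDiffAt ℝ ω (fun p : ℝ × ℝ => Real.sqrt (q k 0 p.1)) ((0:ℝ),mu0 k a) :=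
    ContDiffAt.comp (g := fun y => Real.sqrt (q k 0 y)) ((0:ℝ),mu0 k a) ((q_cd (by omega : 0 ≤ k) (x := (0:ℝ)) (by norm_num)).sqrt hq0.ne') contDiffAt_fst
  apply ContDiffAt.sub _ contDiffAt_const
  apply ContDiffAt.add
  · exact ((contDiffAt_const.mul (contDiffAt_fst.pow k)).mul hsq)
  · apply ContDiffAt.mul
    · exact ((contDiffAt_const.mul contDiffAt_snd).div hsq hs)
    · apply cdSum
      intro ℓ hℓ
      simp only [Finset.mem_Icc] at hℓ
      apply ContDiffAt.div
      · exact (contDiffAt_fst.pow _).mul (q_comp_cd hℓ.2 hb)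
      · have : ContDiffAt ℝ ω (fun p : ℝ × ℝ => DD k ℓ p.2 p.1) ((0:ℝ),mu0 k a) := by
          unfold DD
          exact (contDiffAt_const.mul (contDiffAt_const.sub
            (contDiffAt_const.mul (contDiffAt_fst.pow 2)))).add
            ((contDiffAt_fst.pow k).mul contDiffAt_snd)
        exact this
      · rw [show ((0:ℝ),mu0 k a).1 = (0:ℝ) from rfl, DD_zero k ℓ hk]
        exact_mod_cast (by omega : ℓ ≠ 0)
end T3

section T4
open scoped ContDiff
open Filter Topology

lemma exists_mu (k : ℕ) (hk : 1 ≤ k) (a : ℝ) (ha : a ≠ 0) :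
    ∃ μf : ℝ → ℝ, AnalyticAt ℝ μf 0 ∧ μf 0 = mu0 k a ∧
      ∀ᶠ ε in 𝓝 (0:ℝ), FF k a (ε, μf ε) = 0 := by
  have hkr : (0:ℝ) < k := by exact_mod_cast hk
  have hsp : (0:ℝ) < Real.sqrt k.factorial := Real.sqrt_pos.2 (by positivity)
  set c : ℝ × ℝ := (0, mu0 k a) with hc
  have hFcd : ContDiffAt ℝ ω (FF k a) c := FF_cd hk ha
  set b : (ℝ × ℝ) →L[ℝ] ℝ := fderiv ℝ (FF k a) c with hbdef
  have hb : HasFDerivAt (FF k a) b c :=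
    (hFcd.differentiableAt (by simp)).hasFDerivAt
  -- compute b (0,1)
  have hder1 : HasDerivAt (fun μ => FF k a (0, μ)) (b (0,1)) (mu0 k a) := by
    have hincl : HasDerivAt (fun μ : ℝ => ((0:ℝ), μ)) ((0:ℝ),(1:ℝ)) (mu0 k a) :=
      (hasDerivAt_const _ (0:ℝ)).prodMk (hasDerivAt_id _)
    exact hb.comp_hasDerivAt (mu0 k a) hincl
  have hder2 : HasDerivAt (fun μ => FF k a (0, μ)) (a / ((k:ℝ) * Real.sqrt k.factorial))
      (mu0 k a) := by
    have h1 : HasDerivAt (fun μ : ℝ => a * μ / ((k:ℝ) * Real.sqrt k.factorial) - 1)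
        (a / ((k:ℝ) * Real.sqrt k.factorial)) (mu0 k a) := by
      have := (((hasDerivAt_id (mu0 k a)).const_mul a).div_const
        ((k:ℝ) * Real.sqrt k.factorial)).sub_const 1
      simpa using this
    exact h1.congr_of_eventuallyEq
      (Eventually.of_forall fun μ => by simpa using FF_zero k hk a μ)
  have hb01 : b (0,1) = a / ((k:ℝ) * Real.sqrt k.factorial) := hder1.unique hder2
  have hbne : b (0,1) ≠ 0 := by
    rw [hb01]; exact div_ne_zero ha (by positivity)
  -- linearity decomposition
  have hbsplit : ∀ x y : ℝ, b (x, y) = b (x, 0) + y * b (0,1) := by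
    intro x y
    have hxy : (x, y) = (x, (0:ℝ)) + y • ((0:ℝ),(1:ℝ)) := by
      simp [Prod.ext_iff]
    rw [hxy, map_add, map_smul, smul_eq_mul]
  -- continuous linear equivalence
  set M : (ℝ × ℝ) →L[ℝ] ℝ × ℝ := (ContinuousLinearMap.fst ℝ ℝ ℝ).prod b with hM
  set N : (ℝ × ℝ) →L[ℝ] ℝ × ℝ := (ContinuousLinearMap.fst ℝ ℝ ℝ).prod
      ((b (0,1))⁻¹ • ((ContinuousLinearMap.snd ℝ ℝ ℝ) -
        b.comp ((ContinuousLinearMap.fst ℝ ℝ ℝ).prod 0))) with hN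
  have hNM : Function.LeftInverse N M := by
    intro p
    simp only [hM, hN, ContinuousLinearMap.prod_apply, ContinuousLinearMap.coe_fst',
      ContinuousLinearMap.smul_apply, ContinuousLinearMap.sub_apply,
      ContinuousLinearMap.coe_snd', ContinuousLinearMap.coe_comp', Function.comp_apply,
      ContinuousLinearMap.zero_apply, smul_eq_mul]
    rw [Prod.ext_iff]
    constructor
    · rfl
    · show (b (0,1))⁻¹ * (b (p.1, p.2) - b (p.1, 0)) = p.2
      rw [hbsplit p.1 p.2]
      field_simp
      ring
  have hMN : Function.RightInverse N M := by
    intro qq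
    simp only [hM, hN, ContinuousLinearMap.prod_apply, ContinuousLinearMap.coe_fst',
      ContinuousLinearMap.smul_apply, ContinuousLinearMap.sub_apply,
      ContinuousLinearMap.coe_snd', ContinuousLinearMap.coe_comp', Function.comp_apply,
      ContinuousLinearMap.zero_apply, smul_eq_mul]
    rw [Prod.ext_iff]
    constructor
    · rfl
    · show b (qq.1, (b (0,1))⁻¹ * (qq.2 - b (qq.1, 0))) = qq.2
      rw [hbsplit]
      field_simp
      ring
  set L : (ℝ × ℝ) ≃L[ℝ] ℝ × ℝ := ContinuousLinearEquiv.equivOfInverse M N hNM hMN with hL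
  set G : ℝ × ℝ → ℝ × ℝ := fun p => (p.1, FF k a p) with hG
  have hGcd : ContDiffAt ℝ ω G c := contDiffAt_fst.prodMk hFcd
  have hGL : HasFDerivAt G (L : (ℝ × ℝ) →L[ℝ] ℝ × ℝ) c := by
    have h1 : HasFDerivAt G M c := (hasFDerivAt_fst).prodMk hb
    have h2 : (L : (ℝ × ℝ) →L[ℝ] ℝ × ℝ) = M := by
      ext p <;> rfl
    rw [h2]; exact h1
  -- local inverse
  set φ : ℝ × ℝ → ℝ × ℝ := hGcd.localInverse hGL (by simp) with hφ
  have hφc : φ (G c) = c := hGcd.localInverse_apply_image hGL (by simp)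
  have hφcd : ContDiffAt ℝ ω φ (G c) := hGcd.to_localInverse hGL (by simp)
  have hright : ∀ᶠ y in 𝓝 (G c), G (φ y) = y :=
    (hGcd.hasStrictFDerivAt' hGL (by simp)).eventually_right_inverse
  have hGc : G c = (0, 0) := by
    simp only [hG, hc]
    rw [FF_c k hk a ha]
  set μf : ℝ → ℝ := fun ε => (φ (ε, 0)).2 with hμf
  have hcdμ : AnalyticAt ℝ μf 0 := by
    have hφ00 : ContDiffAt ℝ ω φ ((0:ℝ),(0:ℝ)) := hGc ▸ hφcd
    have h1 : ContDiffAt ℝ ω (fun ε : ℝ => φ (ε, 0)) 0 :=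
      ContDiffAt.comp 0 hφ00 (contDiffAt_id.prodMk contDiffAt_const)
    exact (h1.snd).analyticAt
  refine ⟨μf, hcdμ, ?_, ?_⟩
  · have h0 : φ ((0:ℝ),(0:ℝ)) = c := by rw [← hGc]; exact hφc
    show (φ ((0:ℝ),(0:ℝ))).2 = mu0 k a
    rw [h0]
  · have hright' : ∀ᶠ y in 𝓝 (((0:ℝ),(0:ℝ)) : ℝ × ℝ), G (φ y) = y := hGc ▸ hright
    have htend : Filter.Tendsto (fun ε : ℝ => ((ε : ℝ), (0:ℝ))) (𝓝 0) (𝓝 ((0:ℝ),(0:ℝ))) := by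
      have : Continuous (fun ε : ℝ => ((ε : ℝ), (0:ℝ))) := continuous_id.prodMk continuous_const
      simpa using this.tendsto 0
    filter_upwards [htend.eventually hright'] with ε hev1
    have h1 : (φ (ε, 0)).1 = ε := congrArg Prod.fst hev1
    have h2 : FF k a (φ (ε, 0)) = 0 := congrArg Prod.snd hev1
    have h3 : φ (ε, 0) = (ε, μf ε) := Prod.ext h1 rfl
    rw [← h3]
    exact h2


lemma pFun_q (k ℓ : ℕ) (ε : ℝ) : pFun k ℓ ε = ε ^ (k - ℓ) * Real.sqrt (q k ℓ ε) := rfl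

lemma lam_sub (k ℓ : ℕ) (m ε : ℝ) :
    rFun k 0 ε + ε ^ k * m - rFun k ℓ ε = DD k ℓ m ε := by
  unfold rFun DD; push_cast; ring


end T4
end AuxEigBranch

open Filter Topology
open scoped ContDiff

/-- existence of a real-analytic eigenvector branch through
`(η, ξ, λ) = (k, (a,0,…,0,1), k)` at `ε = 0` for the matrix
`diag(r_0(ε),…,r_k(ε)) + η(ε)·(p_ℓ(ε)p_{ℓ'}(ε))`. -/
theorem eigenvector_branch_exists (k : ℕ) (hk : 1 ≤ k) (a : ℝ) (ha : a ≠ 0) :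
    ∃ δ : ℝ, 0 < δ ∧
      ∃ (η : ℝ → ℝ) (ξ : ℕ → ℝ → ℝ) (lam : ℝ → ℝ),
        (∀ x ∈ Set.Ioo (-δ) δ, AnalyticAt ℝ η x) ∧
        (∀ ℓ ≤ k, ∀ x ∈ Set.Ioo (-δ) δ, AnalyticAt ℝ (ξ ℓ) x) ∧
        (∀ x ∈ Set.Ioo (-δ) δ, AnalyticAt ℝ lam x) ∧
        η 0 = k ∧ lam 0 = k ∧
        (∀ ε ∈ Set.Ioo (-δ) δ, ξ 0 ε = a) ∧
        ξ k 0 = 1 ∧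
        (∀ ℓ, 1 ≤ ℓ → ℓ < k → ξ ℓ 0 = 0) ∧
        ∀ ε ∈ Set.Ioo (-δ) δ,
          (∑ ℓ ∈ Finset.range (k + 1), pFun k ℓ ε * ξ ℓ ε) = 1 ∧
          ∀ ℓ ≤ k, lam ε * ξ ℓ ε = rFun k ℓ ε * ξ ℓ ε + η ε * pFun k ℓ ε := by
  obtain ⟨μf, hμan, hμ0, hμF⟩ := exists_mu k hk a ha
  have hkr : (0:ℝ) < k := by exact_mod_cast hk
  have hsp : (0:ℝ) < Real.sqrt k.factorial := Real.sqrt_pos.2 (by positivity)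
  -- eventual facts
  have hA : ∀ᶠ ε in 𝓝 (0:ℝ), AnalyticAt ℝ μf ε := hμan.eventually_analyticAt
  have hB : ∀ᶠ ε in 𝓝 (0:ℝ), ε ^ 2 * (2*(k:ℝ)) ≤ 1/2 := by
    have hopen : IsOpen {ε : ℝ | ε ^ 2 * (2*(k:ℝ)) < 1/2} :=
      isOpen_lt (by continuity) continuous_const
    filter_upwards [hopen.mem_nhds (by norm_num)] with ε h using le_of_lt h
  have hC : ∀ᶠ ε in 𝓝 (0:ℝ), ∀ ℓ ∈ Finset.Icc 1 k, DD k ℓ (μf ε) ε ≠ 0 := by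
    rw [Filter.eventually_all_finset]
    intro ℓ hℓ
    simp only [Finset.mem_Icc] at hℓ
    have hcont : ContinuousAt (fun ε => DD k ℓ (μf ε) ε) 0 := by
      unfold DD
      exact (continuousAt_const.mul (continuousAt_const.sub
        (continuousAt_const.mul (continuousAt_id.pow 2)))).add
        ((continuousAt_id.pow k).mul hμan.continuousAt)
    apply hcont.eventually_ne
    show DD k ℓ (μf 0) 0 ≠ 0
    rw [DD_zero k ℓ hk]
    exact_mod_cast (show ℓ ≠ 0 by omega)
  obtain ⟨δ, hδpos, hball⟩ := Metric.eventually_nhds_iff_ball.1 (hA.and (hB.and (hC.and hμF)))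
  have hmem : ∀ x ∈ Set.Ioo (-δ) δ, AnalyticAt ℝ μf x ∧ x ^ 2 * (2*(k:ℝ)) ≤ 1/2 ∧
      (∀ ℓ ∈ Finset.Icc 1 k, DD k ℓ (μf x) x ≠ 0) ∧ FF k a (x, μf x) = 0 := by
    intro x hx
    exact hball x (by rw [Real.ball_eq_Ioo]; simpa using hx)
  refine ⟨δ, hδpos, (fun ε => a * μf ε / Real.sqrt (q k 0 ε)),
    (fun ℓ ε => if ℓ = 0 then a else
      (a * μf ε / Real.sqrt (q k 0 ε)) * (ε ^ (k - ℓ) * Real.sqrt (q k ℓ ε)) /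
        DD k ℓ (μf ε) ε),
    (fun ε => rFun k 0 ε + ε ^ k * μf ε), ?_, ?_, ?_, ?_, ?_, ?_, ?_, ?_, ?_⟩
  · -- η analytic
    intro x hx
    obtain ⟨hAx, hBx, hCx, hFx⟩ := hmem x hx
    have hq0 : (0:ℝ) < q k 0 x := q_pos (by omega) hBx
    exact ((contDiffAt_const.mul hAx.contDiffAt).div (sqrt_q_cd (by omega) hBx)
      (by positivity)).analyticAt
  · -- ξ analytic
    intro ℓ hℓ x hx
    obtain ⟨hAx, hBx, hCx, hFx⟩ := hmem x hx
    by_cases h0 : ℓ = 0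
    · subst h0
      simp only [if_pos]
      exact analyticAt_const
    · simp only [if_neg h0]
      have hq0 : (0:ℝ) < q k 0 x := q_pos (by omega) hBx
      have hDcd : ContDiffAt ℝ ω (fun ε => DD k ℓ (μf ε) ε) x := by
        unfold DD
        exact (contDiffAt_const.mul (contDiffAt_const.sub
          (contDiffAt_const.mul (contDiffAt_id.pow 2)))).add
          ((contDiffAt_id.pow k).mul hAx.contDiffAt)
      exact ((((contDiffAt_const.mul hAx.contDiffAt).div (sqrt_q_cd (by omega) hBx)
        (by positivity)).mul ((contDiffAt_id.pow (k - ℓ)).mul (sqrt_q_cd hℓ hBx))).div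
        hDcd (hCx ℓ (Finset.mem_Icc.2 ⟨by omega, hℓ⟩))).analyticAt
  · -- lam analytic
    intro x hx
    obtain ⟨hAx, _, _, _⟩ := hmem x hx
    have h1 : ContDiffAt ℝ ω (rFun k 0) x := by
      unfold rFun
      exact (contDiffAt_const.mul (contDiffAt_const.sub
        (contDiffAt_const.mul (contDiffAt_id.pow 2)))).sub
        (contDiffAt_const.mul (contDiffAt_id.pow 2))
    exact (h1.add ((contDiffAt_id.pow k).mul hAx.contDiffAt)).analyticAt
  · -- η 0 = k
    show a * μf 0 / Real.sqrt (q k 0 0) = k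
    rw [hμ0, mu0, sqrt_q0_zero]
    field_simp
  · -- lam 0 = k
    show rFun k 0 0 + 0 ^ k * μf 0 = k
    rw [zero_pow (by omega : k ≠ 0)]
    unfold rFun
    norm_num
  · -- ξ 0 = a
    intro ε _
    simp
  · -- ξ k 0 = 1
    have hη0 : a * μf 0 / Real.sqrt (q k 0 0) = k := by
      rw [hμ0, mu0, sqrt_q0_zero]; field_simp
    simp only [if_neg (show k ≠ 0 by omega)]
    rw [Nat.sub_self, pow_zero, q_kk_zero, Real.sqrt_one, DD_zero k k hk, hη0]
    field_simp
  · -- ξ ℓ 0 = 0 for middle ℓ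
    intro ℓ h1 h2
    simp only [if_neg (show ℓ ≠ 0 by omega)]
    rw [zero_pow (show k - ℓ ≠ 0 by omega)]
    simp
  · -- main identities
    intro ε hε
    obtain ⟨hAx, hBx, hCx, hFx⟩ := hmem ε hε
    have hq0 : (0:ℝ) < q k 0 ε := q_pos (by omega) hBx
    have hs0 : Real.sqrt (q k 0 ε) ≠ 0 := by positivity
    constructor
    · -- normalization
      have hsplit : Finset.range (k+1) = insert 0 (Finset.Icc 1 k) := by
        ext m; simp [Nat.lt_succ_iff, Finset.mem_Icc]; omega
      have hnotmem : 0 ∉ Finset.Icc 1 k := by simp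
      rw [hsplit, Finset.sum_insert hnotmem]
      have hterm : ∀ ℓ ∈ Finset.Icc 1 k,
          pFun k ℓ ε * (if ℓ = 0 then a else
            (a * μf ε / Real.sqrt (q k 0 ε)) * (ε ^ (k - ℓ) * Real.sqrt (q k ℓ ε)) /
              DD k ℓ (μf ε) ε) =
          (a * μf ε / Real.sqrt (q k 0 ε)) *
            (ε ^ (2 * (k - ℓ)) * q k ℓ ε / DD k ℓ (μf ε) ε) := by
        intro ℓ hℓ
        simp only [Finset.mem_Icc] at hℓ
        have hD := hCx ℓ (Finset.mem_Icc.2 hℓ)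
        have hq := Real.mul_self_sqrt (q_pos hℓ.2 hBx).le
        rw [if_neg (show ℓ ≠ 0 by omega), pFun_q]
        rw [show ε ^ (2 * (k - ℓ)) = ε ^ (k - ℓ) * ε ^ (k - ℓ) by
          rw [← pow_add, two_mul]]
        linear_combination (a * μf ε / Real.sqrt (q k 0 ε) * ε ^ (k - ℓ) * ε ^ (k - ℓ) /
          DD k ℓ (μf ε) ε) * hq
      rw [Finset.sum_congr rfl hterm, ← Finset.mul_sum]
      have hFx' : a * ε ^ k * Real.sqrt (q k 0 ε) +
          (a * μf ε / Real.sqrt (q k 0 ε)) *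
            ∑ ℓ ∈ Finset.Icc 1 k, ε ^ (2 * (k - ℓ)) * q k ℓ ε / DD k ℓ (μf ε) ε - 1 = 0 := hFx
      simp only [if_pos]
      rw [pFun_q, Nat.sub_zero]
      linear_combination hFx'
    · -- eigenvector equations
      intro ℓ hℓ
      by_cases h0 : ℓ = 0
      · subst h0
        simp only [if_pos]
        rw [pFun_q, Nat.sub_zero]
        field_simp
      · simp only [if_neg h0]
        have hD := hCx ℓ (Finset.mem_Icc.2 ⟨by omega, hℓ⟩)
        have hsub := lam_sub k ℓ (μf ε) ε
        set X := (a * μf ε / Real.sqrt (q k 0 ε)) * (ε ^ (k - ℓ) * Real.sqrt (q k ℓ ε)) /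
          DD k ℓ (μf ε) ε with hX
        have hcancel : DD k ℓ (μf ε) ε * X =
            (a * μf ε / Real.sqrt (q k 0 ε)) * (ε ^ (k - ℓ) * Real.sqrt (q k ℓ ε)) := by
          rw [hX]; field_simp
        rw [pFun_q]
        linear_combination X * hsub + hcancel
end

section
/- Fix an integer k ≥ 1 and a real number a ≠ 0, and let r_ℓ and p_ℓ (0 ≤ ℓ ≤ k) be as in the eigenvector-branch setup. Suppose η, ξ_0, …, ξ_k, λ are real-analytic functions on an interval (−δ, δ) satisfying η(0) = k, λ(0) = k, ξ_0 ≡ a, Σ_{ℓ=0}^{k} p_ℓ(ε)ξ_ℓ(ε) = 1, and λ(ε)ξ_ℓ(ε) = r_ℓ(ε)ξ_ℓ(ε) + η(ε)p_ℓ(ε) for all ℓ and all ε ∈ (−δ,δ). Let η°(ε) = ( Σ_{ℓ=1}^{k} p_ℓ(ε)² / (r_0(ε) − r_ℓ(ε)) )^{−1}. Then η(ε) = η°(ε) + √(k!) · k · (1/a − a) · ε^k + O(ε^{k+1}) as ε → 0. In particular, if a = 1 or a = −1, then η(ε) = η°(ε) + O(ε^{k+1}). -/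
open scoped BigOperators

/-- `η°(ε) = ( Σ_{ℓ=1}^{k} p_ℓ(ε)² / (r_0(ε) − r_ℓ(ε)) )⁻¹`. -/
noncomputable def etaCirc (k : ℕ) (ε : ℝ) : ℝ :=
  (∑ ℓ ∈ Finset.Icc 1 k, pFun k ℓ ε ^ 2 / (rFun k 0 ε - rFun k ℓ ε))⁻¹

noncomputable def gAux (k ℓ : ℕ) (ε : ℝ) : ℝ :=
  (k.factorial : ℝ) * (1 - (2 * (ℓ : ℝ) - 1) * ε ^ 2) /
      ((ℓ.factorial : ℝ) *
        ∏ j ∈ Finset.range (k - ℓ + 1), (1 - (((ℓ : ℝ) - 1) + j) * ε ^ 2))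

lemma pFun_eq (k ℓ : ℕ) (ε : ℝ) : pFun k ℓ ε = ε ^ (k - ℓ) * Real.sqrt (gAux k ℓ ε) := rfl

lemma gAux_zero (k ℓ : ℕ) : gAux k ℓ 0 = (k.factorial : ℝ) / (ℓ.factorial : ℝ) := by
  simp [gAux]

lemma gAux_diff (k ℓ : ℕ) : DifferentiableAt ℝ (gAux k ℓ) 0 := by
  apply DifferentiableAt.div
  · fun_prop
  · apply DifferentiableAt.mul (differentiableAt_const _)
    apply DifferentiableAt.fun_finsetProd
    intro i _
    fun_prop
  · simp [Nat.factorial_ne_zero]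

lemma gAux_pos (k ℓ : ℕ) : 0 < gAux k ℓ 0 := by
  rw [gAux_zero]
  positivity

lemma pFun_diff (k ℓ : ℕ) : DifferentiableAt ℝ (pFun k ℓ) 0 := by
  simp only [funext (pFun_eq k ℓ)]
  exact (differentiableAt_pow _).mul ((gAux_diff k ℓ).sqrt (gAux_pos k ℓ).ne')

lemma pFun_zero_of_lt (k ℓ : ℕ) (h : ℓ < k) : pFun k ℓ 0 = 0 := by
  rw [pFun_eq, zero_pow (by omega), zero_mul]

lemma pFun_zero_self (k : ℕ) : pFun k k 0 = 1 := by
  rw [pFun_eq, gAux_zero, Nat.sub_self, pow_zero, one_mul, div_self, Real.sqrt_one]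
  exact_mod_cast Nat.factorial_ne_zero k

lemma rFun_zero (k ℓ : ℕ) : rFun k ℓ 0 = (k : ℝ) - ℓ := by simp [rFun]

lemma rFun_diff (k ℓ : ℕ) (x : ℝ) : DifferentiableAt ℝ (rFun k ℓ) x := by
  unfold rFun; fun_prop

lemma sum_Icc_pFun_zero (k : ℕ) (hk : 1 ≤ k) (c : ℕ → ℝ) :
    ∑ ℓ ∈ Finset.Icc 1 k, pFun k ℓ 0 ^ 2 / c ℓ = 1 / c k := by
  rw [Finset.sum_eq_single_of_mem k (Finset.mem_Icc.mpr ⟨hk, le_refl k⟩)]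
  · rw [pFun_zero_self, one_pow]
  · intro b hb hbk
    rw [pFun_zero_of_lt k b (lt_of_le_of_ne (Finset.mem_Icc.mp hb).2 hbk)]
    simp

open Asymptotics in
/-- any real-analytic eigenvector branch as in the setup (with `ξ_0 ≡ a`,
`η(0) = λ(0) = k`) satisfies `η(ε) = η°(ε) + √(k!)·k·(1/a − a)·ε^k + O(ε^{k+1})`;
in particular `η(ε) = η°(ε) + O(ε^{k+1})` when `a = ±1`. -/
theorem eta_branch_expansion (k : ℕ) (hk : 1 ≤ k) (a : ℝ) (ha : a ≠ 0)
    (δ : ℝ) (hδ : 0 < δ) (η : ℝ → ℝ) (ξ : ℕ → ℝ → ℝ) (lam : ℝ → ℝ)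
    (hη : ∀ x ∈ Set.Ioo (-δ) δ, AnalyticAt ℝ η x)
    (hξ : ∀ ℓ ≤ k, ∀ x ∈ Set.Ioo (-δ) δ, AnalyticAt ℝ (ξ ℓ) x)
    (hlam : ∀ x ∈ Set.Ioo (-δ) δ, AnalyticAt ℝ lam x)
    (hη0 : η 0 = k) (hlam0 : lam 0 = k)
    (hξ0 : ∀ ε ∈ Set.Ioo (-δ) δ, ξ 0 ε = a)
    (hnorm : ∀ ε ∈ Set.Ioo (-δ) δ,
      (∑ ℓ ∈ Finset.range (k + 1), pFun k ℓ ε * ξ ℓ ε) = 1)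
    (heig : ∀ ε ∈ Set.Ioo (-δ) δ, ∀ ℓ ≤ k,
      lam ε * ξ ℓ ε = rFun k ℓ ε * ξ ℓ ε + η ε * pFun k ℓ ε) :
    ((fun ε : ℝ => η ε - (etaCirc k ε + Real.sqrt (k.factorial) * k * (1 / a - a) * ε ^ k))
        =O[nhds 0] fun ε : ℝ => ε ^ (k + 1))
    ∧ (a = 1 ∨ a = -1 →
        (fun ε : ℝ => η ε - etaCirc k ε) =O[nhds 0] fun ε : ℝ => ε ^ (k + 1)) := by
  have h0mem : (0:ℝ) ∈ Set.Ioo (-δ) δ := by constructor <;> linarith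
  have hkR : (k : ℝ) ≠ 0 := Nat.cast_ne_zero.mpr (by omega)
  set S0f : ℝ → ℝ := fun ε => ∑ ℓ ∈ Finset.Icc 1 k, pFun k ℓ ε ^ 2 / (rFun k 0 ε - rFun k ℓ ε) with hS0f
  set Sf : ℝ → ℝ := fun ε => ∑ ℓ ∈ Finset.Icc 1 k, pFun k ℓ ε ^ 2 / (lam ε - rFun k ℓ ε) with hSf
  set Tf : ℝ → ℝ := fun ε => ∑ ℓ ∈ Finset.Icc 1 k,
      pFun k ℓ ε ^ 2 / ((rFun k 0 ε - rFun k ℓ ε) * (lam ε - rFun k ℓ ε)) with hTf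
  set qf : ℝ → ℝ := fun ε => Real.sqrt (gAux k 0 ε) / Real.sqrt (k.factorial) with hqf
  set F : ℝ → ℝ := fun ε => (-a * S0f ε + (η ε / a) * Tf ε) / (Sf ε * S0f ε) * qf ε with hF
  have hlamd : DifferentiableAt ℝ lam 0 := (hlam 0 h0mem).differentiableAt
  have hηd : DifferentiableAt ℝ η 0 := (hη 0 h0mem).differentiableAt
  -- values of denominators at 0
  have hden0 : ∀ ℓ ∈ Finset.Icc 1 k, rFun k 0 0 - rFun k ℓ 0 = (ℓ : ℝ) := by
    intro ℓ hℓ; rw [rFun_zero, rFun_zero]; push_cast; ring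
  have hden1 : ∀ ℓ ∈ Finset.Icc 1 k, lam 0 - rFun k ℓ 0 = (ℓ : ℝ) := by
    intro ℓ hℓ
    have := (Finset.mem_Icc.mp hℓ).2
    rw [hlam0, rFun_zero]; ring
  have hℓne : ∀ ℓ ∈ Finset.Icc 1 k, (ℓ : ℝ) ≠ 0 := fun ℓ hℓ =>
    Nat.cast_ne_zero.mpr (by have := (Finset.mem_Icc.mp hℓ).1; omega)
  -- differentiability of the sums
  have hS0d : DifferentiableAt ℝ S0f 0 := by
    apply DifferentiableAt.fun_sum
    intro ℓ hℓ
    exact ((pFun_diff k ℓ).pow 2).div ((rFun_diff k 0 0).sub (rFun_diff k ℓ 0))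
      (by rw [hden0 ℓ hℓ]; exact hℓne ℓ hℓ)
  have hSd : DifferentiableAt ℝ Sf 0 := by
    apply DifferentiableAt.fun_sum
    intro ℓ hℓ
    exact ((pFun_diff k ℓ).pow 2).div (hlamd.sub (rFun_diff k ℓ 0))
      (by rw [hden1 ℓ hℓ]; exact hℓne ℓ hℓ)
  have hTd : DifferentiableAt ℝ Tf 0 := by
    apply DifferentiableAt.fun_sum
    intro ℓ hℓ
    refine ((pFun_diff k ℓ).pow 2).div
      ((((rFun_diff k 0 0).sub (rFun_diff k ℓ 0))).mul (hlamd.sub (rFun_diff k ℓ 0))) ?_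
    rw [hden0 ℓ hℓ, hden1 ℓ hℓ]
    exact mul_ne_zero (hℓne ℓ hℓ) (hℓne ℓ hℓ)
  -- values at 0
  have hS00 : S0f 0 = 1 / (k : ℝ) := by
    rw [hS0f]
    simp only
    rw [show (fun ℓ => pFun k ℓ 0 ^ 2 / (rFun k 0 0 - rFun k ℓ 0)) = fun ℓ => pFun k ℓ 0 ^ 2 / (rFun k 0 0 - rFun k ℓ 0) from rfl]
    rw [Finset.sum_congr rfl (fun ℓ hℓ => by rw [hden0 ℓ hℓ])]
    rw [sum_Icc_pFun_zero k hk]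
  have hS0 : Sf 0 = 1 / (k : ℝ) := by
    rw [hSf]; simp only
    rw [Finset.sum_congr rfl (fun ℓ hℓ => by rw [hden1 ℓ hℓ])]
    rw [sum_Icc_pFun_zero k hk]
  have hT0 : Tf 0 = 1 / ((k : ℝ) * k) := by
    rw [hTf]; simp only
    rw [Finset.sum_congr rfl (fun ℓ hℓ => by rw [hden0 ℓ hℓ, hden1 ℓ hℓ])]
    exact sum_Icc_pFun_zero k hk _
  have hq0 : qf 0 = 1 := by
    rw [hqf]; simp only [gAux_zero, Nat.factorial_zero, Nat.cast_one, div_one]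
    exact div_self (Real.sqrt_ne_zero'.mpr (by positivity))
  have hqd : DifferentiableAt ℝ qf 0 := ((gAux_diff k 0).sqrt (gAux_pos k 0).ne').div_const _
  have hFd : DifferentiableAt ℝ F 0 := by
    apply DifferentiableAt.mul _ hqd
    apply DifferentiableAt.div
    · exact ((differentiableAt_const _).mul hS0d).add ((hηd.div_const a).mul hTd)
    · exact hSd.mul hS0d
    · rw [hS0, hS00]; positivity
  have hF0 : F 0 = (k : ℝ) * (1 / a - a) := by
    rw [hF]; simp only
    rw [hS0, hS00, hT0, hq0, hη0]
    field_simp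
    ring
  -- eventual nonvanishing facts
  have hIoo : ∀ᶠ ε in nhds (0:ℝ), ε ∈ Set.Ioo (-δ) δ :=
    Filter.eventually_of_mem (Ioo_mem_nhds (by linarith) hδ) (fun x h => h)
  have hrne : ∀ᶠ ε in nhds (0:ℝ), ∀ ℓ ∈ Finset.Icc 1 k, rFun k 0 ε - rFun k ℓ ε ≠ 0 := by
    rw [Filter.eventually_all_finset]
    intro ℓ hℓ
    have hc : ContinuousAt (fun ε => rFun k 0 ε - rFun k ℓ ε) 0 :=
      ((rFun_diff k 0 0).sub (rFun_diff k ℓ 0)).continuousAt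
    exact hc.eventually_ne (by rw [hden0 ℓ hℓ]; exact hℓne ℓ hℓ)
  have hlne : ∀ᶠ ε in nhds (0:ℝ), ∀ ℓ ∈ Finset.Icc 1 k, lam ε - rFun k ℓ ε ≠ 0 := by
    rw [Filter.eventually_all_finset]
    intro ℓ hℓ
    have hc : ContinuousAt (fun ε => lam ε - rFun k ℓ ε) 0 :=
      (hlamd.sub (rFun_diff k ℓ 0)).continuousAt
    exact hc.eventually_ne (by rw [hden1 ℓ hℓ]; exact hℓne ℓ hℓ)
  have hSne : ∀ᶠ ε in nhds (0:ℝ), Sf ε ≠ 0 :=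
    hSd.continuousAt.eventually_ne (by rw [hS0]; positivity)
  have hS0ne : ∀ᶠ ε in nhds (0:ℝ), S0f ε ≠ 0 :=
    hS0d.continuousAt.eventually_ne (by rw [hS00]; positivity)
  -- the key eventual identity
  have hkey : ∀ᶠ ε in nhds (0:ℝ),
      η ε - etaCirc k ε = Real.sqrt (k.factorial) * ε ^ k * F ε := by
    filter_upwards [hIoo, hrne, hlne, hSne, hS0ne] with ε hε hr hl hS hS0ε
    -- ℓ = 0 eigen equation
    have e0 := heig ε hε 0 (by omega)
    rw [hξ0 ε hε] at e0
    have e1 : η ε * pFun k 0 ε = (lam ε - rFun k 0 ε) * a := by linarith [e0]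
    -- ξ formula for ℓ ≥ 1
    have hxi : ∀ ℓ ∈ Finset.Icc 1 k, pFun k ℓ ε * ξ ℓ ε = η ε * (pFun k ℓ ε ^ 2 / (lam ε - rFun k ℓ ε)) := by
      intro ℓ hℓ
      have he := heig ε hε ℓ (Finset.mem_Icc.mp hℓ).2
      have hd := hl ℓ hℓ
      have hxv : ξ ℓ ε = η ε * pFun k ℓ ε / (lam ε - rFun k ℓ ε) := by
        rw [eq_div_iff hd]; linarith [he]
      rw [hxv]; field_simp
    -- e2 : normalization
    have hsplit : Finset.range (k+1) = insert 0 (Finset.Icc 1 k) := by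
      ext x; simp [Finset.mem_range, Finset.mem_Icc]; omega
    have e2 : pFun k 0 ε * a + η ε * Sf ε = 1 := by
      have hn := hnorm ε hε
      rw [hsplit, Finset.sum_insert (by simp)] at hn
      rw [Finset.sum_congr rfl hxi, ← Finset.mul_sum, hξ0 ε hε] at hn
      rw [hSf]; exact hn
    -- e3
    have e3 : S0f ε - Sf ε = (lam ε - rFun k 0 ε) * Tf ε := by
      rw [hS0f, hSf, hTf]
      simp only
      rw [← Finset.sum_sub_distrib, Finset.mul_sum]
      apply Finset.sum_congr rfl
      intro ℓ hℓ
      have h1 := hr ℓ hℓ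
      have h2 := hl ℓ hℓ
      field_simp
      ring
    -- polynomial key identity
    have key : (η ε * S0f ε - 1) * (a * Sf ε)
        = pFun k 0 ε * (-(a*a) * S0f ε + η ε * Tf ε) := by
      linear_combination (-(η ε) * Tf ε * Sf ε - pFun k 0 ε * a * Tf ε) * e1
        + (a * Sf ε + η ε * pFun k 0 ε * Tf ε) * e2
        + (a * Sf ε * η ε + pFun k 0 ε * a^2) * e3
    -- p0 in terms of qf
    have hp0 : pFun k 0 ε = Real.sqrt (k.factorial) * (ε ^ k * qf ε) := by
      rw [pFun_eq, hqf]
      have : Real.sqrt (k.factorial) ≠ 0 := Real.sqrt_ne_zero'.mpr (by positivity)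
      field_simp
      rw [Nat.sub_zero]; ring
    -- conclude
    have hEC : etaCirc k ε = (S0f ε)⁻¹ := rfl
    rw [hEC, hF]
    simp only
    have final : η ε - (S0f ε)⁻¹
        = pFun k 0 ε * ((-a * S0f ε + η ε / a * Tf ε) / (Sf ε * S0f ε)) := by
      field_simp
      linear_combination key
    rw [final, hp0]
    ring
  have hO1 : (fun ε : ℝ => F ε - F 0) =O[nhds 0] fun ε : ℝ => ε := by
    simpa using hFd.isBigO_sub
  have hO2 : (fun ε : ℝ => ε ^ k * (F ε - F 0)) =O[nhds 0] fun ε : ℝ => ε ^ (k+1) := by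
    have := (isBigO_refl (fun ε : ℝ => ε ^ k) (nhds 0)).mul hO1
    simpa [pow_succ] using this
  have hmain : (fun ε : ℝ => η ε - (etaCirc k ε + Real.sqrt (k.factorial) * k * (1/a - a) * ε ^ k))
      =O[nhds 0] fun ε : ℝ => ε ^ (k+1) := by
    have heq : (fun ε : ℝ => η ε - (etaCirc k ε + Real.sqrt (k.factorial) * k * (1/a - a) * ε ^ k))
        =ᶠ[nhds 0] fun ε : ℝ => Real.sqrt (k.factorial) * (ε ^ k * (F ε - F 0)) := by
      filter_upwards [hkey] with ε hε
      rw [hF0]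
      linear_combination hε
    exact heq.trans_isBigO (hO2.const_mul_left _)
  refine ⟨hmain, ?_⟩
  intro hA
  have hz : 1/a - a = 0 := by rcases hA with h | h <;> rw [h] <;> norm_num
  simpa only [hz, mul_zero, zero_mul, add_zero] using hmain
end
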